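/- arXiv:1410.1920 — 16 statements merged into one kernel-verified Lean document; each statement's English description precedes it below -/
import Mathlib

section
/- Fix prior probabilities D0, D1 ∈ (0,1) with D0 + D1 = 1, a privacy parameter v > 0, and α ∈ (0, 1/2]. Then there exists a threshold R > 0 such that for all coupon valuations ρ0, ρ1 > 0 with ρ0 + ρ1 ≥ R and min{ρ0, ρ1} ≥ α·(ρ0 + ρ1), the privacy-aware utility u attains a unique maximum over the domain D, and this maximizer has the form (p*, p*) with 1/2 ≤ p* < 1 (i.e., the privacy-aware agent plays a nondegenerate Randomized Response strategy). -/
/-- The strategy domain `D = ((0,1)×(0,1)) ∪ {(1,0),(0,1)}`. -/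
def strategyDomain : Set (ℝ × ℝ) :=
  (Set.Ioo (0:ℝ) 1 ×ˢ Set.Ioo (0:ℝ) 1) ∪ {((1:ℝ), (0:ℝ)), ((0:ℝ), (1:ℝ))}

/-- `X(p,q) = max{p/(1−q), (1−q)/p, q/(1−p), (1−p)/q}` (with the Lean convention
`0/0 = 0`, each ratio with zero denominator at the corner points also has zero
numerator, and `X = 1` there). -/
noncomputable def Xgame (p q : ℝ) : ℝ :=
  max (max (p / (1 - q)) ((1 - q) / p)) (max (q / (1 - p)) ((1 - p) / q))

/-- The privacy-aware utility `u(p,q) = D0·ρ0·p + D1·ρ1·q − v·ln(X(p,q))`. -/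
noncomputable def uPriv (D0 D1 ρ0 ρ1 v p q : ℝ) : ℝ :=
  D0 * ρ0 * p + D1 * ρ1 * q - v * Real.log (Xgame p q)

lemma Xgame_corner1 : Xgame 1 0 = 1 := by unfold Xgame; norm_num

lemma Xgame_corner2 : Xgame 0 1 = 1 := by unfold Xgame; norm_num

lemma Xgame_diag (p : ℝ) (h1 : 1/2 ≤ p) (h2 : p < 1) : Xgame p p = p/(1-p) := by
  have hp0 : 0 < p := by linarith
  have h1p : 0 < 1-p := by linarith
  have hle : (1-p)/p ≤ p/(1-p) := by
    rw [div_le_div_iff₀ hp0 h1p]; nlinarith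
  unfold Xgame
  rw [max_self, max_eq_left hle]

lemma phi_deriv (c v t : ℝ) (ht0 : 0 < t) (ht1 : t < 1) :
    HasDerivAt (fun t => c*t - v*(Real.log t - Real.log (1-t)))
      (c - v*(1/t + 1/(1-t))) t := by
  have h1 : HasDerivAt (fun t : ℝ => c*t) c t := by
    simpa using (hasDerivAt_id t).const_mul c
  have h2 : HasDerivAt Real.log t⁻¹ t := Real.hasDerivAt_log (ne_of_gt ht0)
  have h3 : HasDerivAt (fun t : ℝ => (1:ℝ) - t) (-1) t := by
    simpa using (hasDerivAt_id t).const_sub 1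
  have h4 : HasDerivAt (fun t : ℝ => Real.log (1-t)) (-1/(1-t)) t :=
    h3.log (by linarith)
  have h5 := (h1.sub (((h2.sub h4)).const_mul v))
  convert h5 using 1
  have : (1:ℝ)-t ≠ 0 := by linarith
  · rfl
  · rfl
  · rfl
  · rw [neg_div, sub_neg_eq_add, one_div, one_div]

lemma phi_mono (c v ps : ℝ) (hv : 0 < v) (hc : 0 < c)
    (hps : ps * (1-ps) = v/c) (hps2 : 1/2 ≤ ps) (hps1 : ps < 1) :
    StrictMonoOn (fun t => c*t - v*(Real.log t - Real.log (1-t))) (Set.Icc (1/2) ps) := by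
  apply strictMonoOn_of_deriv_pos (convex_Icc _ _)
  · intro t ht
    obtain ⟨ht1, ht2⟩ := ht
    exact ((phi_deriv c v t (by linarith) (by linarith)).continuousAt).continuousWithinAt
  · intro t ht
    rw [interior_Icc] at ht
    obtain ⟨ht1, ht2⟩ := ht
    rw [(phi_deriv c v t (by linarith) (by linarith)).deriv]
    have h0 : 0 < t := by linarith
    have h1 : 0 < 1 - t := by linarith
    rw [eq_div_iff (ne_of_gt hc)] at hps
    have hfac : 0 < (ps - t) * (ps + t - 1) := mul_pos (by linarith) (by linarith)
    have hlt : v < c * (t*(1-t)) := by nlinarith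
    have heq : v * (1/t + 1/(1-t)) = v / (t*(1-t)) := by field_simp; ring
    have : v / (t*(1-t)) < c := (div_lt_iff₀ (by positivity)).2 (by linarith)
    linarith [heq ▸ this]

lemma phi_anti (c v ps : ℝ) (hv : 0 < v) (hc : 0 < c)
    (hps : ps * (1-ps) = v/c) (hps2 : 1/2 ≤ ps) (hps1 : ps < 1) :
    StrictAntiOn (fun t => c*t - v*(Real.log t - Real.log (1-t))) (Set.Ico ps 1) := by
  apply strictAntiOn_of_deriv_neg (convex_Ico _ _)
  · intro t ht
    obtain ⟨ht1, ht2⟩ := ht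
    exact ((phi_deriv c v t (by linarith) (by linarith)).continuousAt).continuousWithinAt
  · intro t ht
    rw [interior_Ico] at ht
    obtain ⟨ht1, ht2⟩ := ht
    rw [(phi_deriv c v t (by linarith) (by linarith)).deriv]
    have h0 : 0 < t := by linarith
    have h1 : 0 < 1 - t := by linarith
    rw [eq_div_iff (ne_of_gt hc)] at hps
    have hfac : 0 < (t - ps) * (ps + t - 1) := mul_pos (by linarith) (by linarith)
    have hlt : c * (t*(1-t)) < v := by nlinarith
    have heq : v * (1/t + 1/(1-t)) = v / (t*(1-t)) := by field_simp; ring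
    have : c < v / (t*(1-t)) := (lt_div_iff₀ (by positivity)).2 (by linarith)
    linarith [heq ▸ this]

lemma phi_le (c v ps : ℝ) (hv : 0 < v) (hc : 0 < c)
    (hps : ps * (1-ps) = v/c) (hps2 : 1/2 ≤ ps) (hps1 : ps < 1) :
    ∀ t ∈ Set.Ico (1/2:ℝ) 1, t ≠ ps →
      c*t - v*(Real.log t - Real.log (1-t)) < c*ps - v*(Real.log ps - Real.log (1-ps)) := by
  intro t ⟨ht1, ht2⟩ hne
  rcases lt_or_gt_of_ne hne with h | h
  · exact phi_mono c v ps hv hc hps hps2 hps1 ⟨ht1, le_of_lt h⟩ ⟨hps2, le_refl _⟩ h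
  · exact phi_anti c v ps hv hc hps hps2 hps1 ⟨le_refl _, hps1⟩ ⟨le_of_lt h, ht2⟩ h

lemma phi_le' (c v ps : ℝ) (hv : 0 < v) (hc : 0 < c)
    (hps : ps * (1-ps) = v/c) (hps2 : 1/2 ≤ ps) (hps1 : ps < 1) :
    ∀ t ∈ Set.Ico (1/2:ℝ) 1,
      c*t - v*(Real.log t - Real.log (1-t)) ≤ c*ps - v*(Real.log ps - Real.log (1-ps)) := by
  intro t ht
  rcases eq_or_ne t ps with h | h
  · rw [h]
  · exact (phi_le c v ps hv hc hps hps2 hps1 t ht h).le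

set_option maxHeartbeats 1000000 in
lemma interior_bound (a b v p q ps : ℝ) (hv : 0 < v) (ha : 0 < a) (hb : 0 < b)
    (hp : p ∈ Set.Ioo (0:ℝ) 1) (hq : q ∈ Set.Ioo (0:ℝ) 1)
    (hps : ps*(1-ps) = v/(a+b)) (hps2 : 1/2 ≤ ps) (hps1 : ps < 1)
    (hM : max a b < (a+b)*ps - v*(Real.log ps - Real.log (1-ps))) :
    (a*p + b*q - v*Real.log (Xgame p q) ≤ (a+b)*ps - v*(Real.log ps - Real.log (1-ps))) ∧
    (a*p + b*q - v*Real.log (Xgame p q) = (a+b)*ps - v*(Real.log ps - Real.log (1-ps)) →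
      p = ps ∧ q = ps) := by
  obtain ⟨hp0, hp1⟩ := hp
  obtain ⟨hq0, hq1⟩ := hq
  have hp1' : 0 < 1 - p := by linarith
  have hq1' : 0 < 1 - q := by linarith
  set M := (a+b)*ps - v*(Real.log ps - Real.log (1-ps)) with hMdef
  set x := Xgame p q with hxdef
  have hr1 : p / (1-q) ≤ x := le_trans (le_max_left _ _) (le_max_left _ _)
  have hr2 : (1-q) / p ≤ x := le_trans (le_max_right _ _) (le_max_left _ _)
  have hr3 : q / (1-p) ≤ x := le_trans (le_max_left _ _) (le_max_right _ _)
  have hr4 : (1-p) / q ≤ x := le_trans (le_max_right _ _) (le_max_right _ _)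
  have hx1 : p ≤ x*(1-q) := by rw [div_le_iff₀ hq1'] at hr1; linarith
  have hx2 : 1-q ≤ x*p := by rw [div_le_iff₀ hp0] at hr2; linarith
  have hx3 : q ≤ x*(1-p) := by rw [div_le_iff₀ hp1'] at hr3; linarith
  have hx4 : 1-p ≤ x*q := by rw [div_le_iff₀ hq0] at hr4; linarith
  have hxpos : 0 < x := lt_of_lt_of_le (div_pos hp0 hq1') hr1
  clear hr1 hr2 hr3 hr4
  clear_value x M
  have hxge1 : 1 ≤ x := by nlinarith
  rcases eq_or_lt_of_le hxge1 with hx1eq | h1x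
  · -- x = 1
    have hlog : Real.log x = 0 := by rw [← hx1eq]; exact Real.log_one
    have hpq : p = 1 - q := by nlinarith [hx1, hx2]
    have hlt : a*p + b*q - v*Real.log x < M := by
      rw [hlog, hpq]
      have : a*(1-q) + b*q ≤ max a b := by
        rcases le_total a b with h | h
        · rw [max_eq_right h]; nlinarith
        · rw [max_eq_left h]; nlinarith
      linarith
    exact ⟨hlt.le, fun h => absurd h (ne_of_lt hlt)⟩
  · -- 1 < x
    have hlogx_pos : 0 < Real.log x := Real.log_pos h1x
    set t := x/(1+x) with htdef
    have h1xpos : 0 < 1 + x := by linarith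
    have ht0 : 1/2 ≤ t := by rw [le_div_iff₀ h1xpos]; linarith
    have ht1 : t < 1 := by rw [div_lt_one h1xpos]; linarith
    clear_value t
    have h1t : 1 - t = 1/(1+x) := by rw [htdef]; field_simp; ring
    have hlogt : Real.log x = Real.log t - Real.log (1-t) := by
      rw [h1t, htdef, Real.log_div (by positivity) (by positivity),
        one_div, Real.log_inv]
      ring
    have hφle : (a+b)*t - v*(Real.log t - Real.log (1-t)) ≤ M := by
      rw [hMdef]
      exact phi_le' (a+b) v ps hv (by linarith) hps hps2 hps1 t ⟨ht0, ht1⟩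
    rcases le_or_gt (b*x) a with hcase1 | hcase1
    · -- a p + b q ≤ a, strictly below M
      have hab : a*p + b*q ≤ a := by
        nlinarith [mul_le_mul_of_nonneg_left hx3 hb.le,
          mul_nonneg (sub_nonneg.2 hcase1) hp1'.le]
      have hvl : 0 < v * Real.log x := mul_pos hv hlogx_pos
      have hlt : a*p + b*q - v*Real.log x < M :=
        lt_of_lt_of_le (show a*p + b*q - v*Real.log x < a by linarith)
          (le_trans (le_max_left a b) hM.le)
      exact ⟨hlt.le, fun h => absurd h (ne_of_lt hlt)⟩
    rcases le_or_gt (a*x) b with hcase2 | hcase2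
    · have hab : a*p + b*q ≤ b := by
        nlinarith [mul_le_mul_of_nonneg_left hx1 ha.le,
          mul_nonneg (sub_nonneg.2 hcase2) hq1'.le]
      have hvl : 0 < v * Real.log x := mul_pos hv hlogx_pos
      have hlt : a*p + b*q - v*Real.log x < M :=
        lt_of_lt_of_le (show a*p + b*q - v*Real.log x < b by linarith)
          (le_trans (le_max_right a b) hM.le)
      exact ⟨hlt.le, fun h => absurd h (ne_of_lt hlt)⟩
    · -- main case
      have e1 : 0 ≤ (b*x - a)*(x - p - x*q) := mul_nonneg (by linarith) (by nlinarith)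
      have e2 : 0 ≤ (a*x - b)*(x - x*p - q) := mul_nonneg (by linarith) (by nlinarith)
      have hid : (b*x-a)*(x-p-x*q)+(a*x-b)*(x-x*p-q)
          = (x-1)*((a+b)*x-(1+x)*(a*p+b*q)) := by ring
      have h3 : 0 ≤ (x-1)*((a+b)*x-(1+x)*(a*p+b*q)) := hid ▸ add_nonneg e1 e2
      have key : (1+x)*(a*p+b*q) ≤ (a+b)*x := by
        by_contra hD
        push_neg at hD
        nlinarith [mul_pos (sub_pos.2 h1x) (sub_pos.2 hD)]
      have hlin : a*p + b*q ≤ (a+b)*t := by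
        rw [htdef, mul_div_assoc', le_div_iff₀ h1xpos]
        linarith
      have hle : a*p + b*q - v*Real.log x ≤ M := by
        rw [hlogt]; linarith
      refine ⟨hle, fun heq => ?_⟩
      have hφeq : (a+b)*t - v*(Real.log t - Real.log (1-t)) = M := by
        rw [hlogt] at heq; linarith
      have hts : t = ps := by
        by_contra hne
        rw [hMdef] at hφeq
        exact absurd hφeq
          (ne_of_lt (phi_le (a+b) v ps hv (by linarith) hps hps2 hps1 t ⟨ht0, ht1⟩ hne))
      have hlineq : (1+x)*(a*p+b*q) = (a+b)*x := by
        have : a*p + b*q = (a+b)*t := by rw [hlogt] at heq; linarith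
        rw [this, htdef]; field_simp
      have hz : (b*x-a)*(x-p-x*q)+(a*x-b)*(x-x*p-q) = 0 := by
        rw [hid, hlineq]; ring
      have z1 : x - p - x*q = 0 := by
        have h1 : (b*x-a)*(x-p-x*q) = 0 := by linarith only [e1, e2, hz]
        rcases mul_eq_zero.1 h1 with h | h
        · linarith
        · exact h
      have z2 : x - x*p - q = 0 := by
        have h2 : (a*x-b)*(x-x*p-q) = 0 := by linarith only [e1, e2, hz]
        rcases mul_eq_zero.1 h2 with h | h
        · linarith
        · exact h
      have hpq : p = q := by
        have hz3 : (x-1)*(p-q) = 0 := by linear_combination z1 - z2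
        rcases mul_eq_zero.1 hz3 with h | h
        · linarith
        · linarith
      have hpt : p = t := by
        rw [htdef, eq_div_iff (ne_of_gt h1xpos)]
        linear_combination -z1 + x*hpq
      exact ⟨hpt.trans hts, (hpq ▸ hpt).trans hts⟩


lemma key_gap (v β S : ℝ) (hv : 0 < v) (hβ0 : 0 < β) (hβh : β ≤ 1/2)
    (hS0 : 0 < S) (hβ2S : 16*v ≤ β^2*S) :
    v + v*(Real.log S - Real.log v) < β*S := by
  have hSv0 : 0 < S/v := by positivity
  have hlogs : Real.log (S/v) = Real.log S - Real.log v :=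
    Real.log_div (ne_of_gt hS0) (ne_of_gt hv)
  have hsqrt0 : 0 < Real.sqrt (S/v) := Real.sqrt_pos.2 hSv0
  have hsqr : Real.log (S/v) ≤ 2*Real.sqrt (S/v) := by
    have h2 : Real.log (Real.sqrt (S/v)) = Real.log (S/v)/2 := Real.log_sqrt hSv0.le
    linarith [Real.log_le_sub_one_of_pos hsqrt0]
  have hprod : Real.sqrt (S/v) * Real.sqrt v = Real.sqrt S := by
    rw [← Real.sqrt_mul hSv0.le]; congr 1; field_simp
  have hsv : Real.sqrt v ^ 2 = v := Real.sq_sqrt hv.le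
  have hss : Real.sqrt S ^ 2 = S := Real.sq_sqrt hS0.le
  have hsv0 : 0 < Real.sqrt v := Real.sqrt_pos.2 hv
  have hss0 : 0 < Real.sqrt S := Real.sqrt_pos.2 hS0
  have hβss : 4*Real.sqrt v ≤ β*Real.sqrt S := by
    have e1 : (4:ℝ)*Real.sqrt v = Real.sqrt (16*v) := by
      rw [show (16:ℝ)*v = 4^2*v by norm_num, Real.sqrt_mul (by positivity) v,
        Real.sqrt_sq (by norm_num)]
    have e2 : β*Real.sqrt S = Real.sqrt (β^2*S) := by
      rw [Real.sqrt_mul (sq_nonneg β), Real.sqrt_sq hβ0.le]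
    rw [e1, e2]
    exact Real.sqrt_le_sqrt hβ2S
  have hvsS : v*Real.sqrt (S/v) = Real.sqrt v * Real.sqrt S := by
    calc v*Real.sqrt (S/v) = Real.sqrt v ^2 * Real.sqrt (S/v) := by rw [hsv]
      _ = Real.sqrt v * (Real.sqrt (S/v) * Real.sqrt v) := by ring
      _ = Real.sqrt v * Real.sqrt S := by rw [hprod]
  have h5 : v*Real.log (S/v) ≤ 2*(Real.sqrt v * Real.sqrt S) := by
    calc v*Real.log (S/v) ≤ v*(2*Real.sqrt (S/v)) :=
          mul_le_mul_of_nonneg_left hsqr hv.le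
      _ = 2*(v*Real.sqrt (S/v)) := by ring
      _ = 2*(Real.sqrt v * Real.sqrt S) := by rw [hvsS]
  have h6 : Real.sqrt v * Real.sqrt S ≤ β*S/4 := by
    have e : β * Real.sqrt S * Real.sqrt S = β * S := by
      rw [mul_assoc, Real.mul_self_sqrt hS0.le]
    have h := mul_le_mul_of_nonneg_right hβss hss0.le
    nlinarith
  have h7 : 32*v ≤ β*S := by
    nlinarith [mul_nonneg (mul_nonneg (sub_nonneg.2 hβh) hβ0.le) hS0.le]
  rw [← hlogs]
  linarith

set_option maxHeartbeats 2000000 in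
/-- For large enough total coupon value, the privacy-aware agent's unique
utility-maximizing strategy over the domain is a nondegenerate Randomized
Response strategy `(p*, p*)` with `1/2 ≤ p* < 1`. -/
theorem privacy_aware_plays_randomized_response
    (D0 D1 v α : ℝ)
    (hD0 : D0 ∈ Set.Ioo (0:ℝ) 1) (hD1 : D1 ∈ Set.Ioo (0:ℝ) 1)
    (hsum : D0 + D1 = 1) (hv : 0 < v) (hα : α ∈ Set.Ioc (0:ℝ) (1/2)) :
    ∃ R : ℝ, 0 < R ∧ ∀ ρ0 ρ1 : ℝ, 0 < ρ0 → 0 < ρ1 → R ≤ ρ0 + ρ1 →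
      α * (ρ0 + ρ1) ≤ min ρ0 ρ1 →
      ∃ p : ℝ, 1/2 ≤ p ∧ p < 1 ∧ (p, p) ∈ strategyDomain ∧
        (∀ s ∈ strategyDomain, uPriv D0 D1 ρ0 ρ1 v s.1 s.2 ≤ uPriv D0 D1 ρ0 ρ1 v p p) ∧
        (∀ s ∈ strategyDomain,
          uPriv D0 D1 ρ0 ρ1 v s.1 s.2 = uPriv D0 D1 ρ0 ρ1 v p p → s = (p, p)) := by
  obtain ⟨hD00, hD01⟩ := hD0
  obtain ⟨hD10, hD11⟩ := hD1
  obtain ⟨hα0, hα1⟩ := hα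
  set m0 := min D0 D1 with hm0def
  have hm0 : 0 < m0 := lt_min hD00 hD10
  have hm0D0 : m0 ≤ D0 := min_le_left _ _
  have hm0D1 : m0 ≤ D1 := min_le_right _ _
  have hm01 : m0 ≤ 1 := le_trans hm0D0 hD01.le
  set β := α * m0 with hβdef
  have hβ0 : 0 < β := mul_pos hα0 hm0
  have hβh : β ≤ 1/2 := by
    calc β = α * m0 := hβdef
      _ ≤ (1/2) * 1 := mul_le_mul hα1 hm01 hm0.le (by norm_num)
      _ = 1/2 := by norm_num
  refine ⟨16*v/β^2 + 16*v/(β*m0) + 8*v/m0 + 1, by positivity, ?_⟩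
  intro ρ0 ρ1 hρ0 hρ1 hR hmin
  have ht1 : 0 < 16*v/β^2 := by positivity
  have ht2 : 0 < 16*v/(β*m0) := by positivity
  have ht3 : 0 < 8*v/m0 := by positivity
  set S := ρ0 + ρ1 with hSdef
  have hS0 : 0 < S := by positivity
  set a := D0*ρ0 with hadef
  set b := D1*ρ1 with hbdef
  have ha : 0 < a := mul_pos hD00 hρ0
  have hb : 0 < b := mul_pos hD10 hρ1
  -- basic size facts
  have hm0S : m0*S ≤ a+b := by
    have h1 : m0*ρ0 ≤ a := mul_le_mul_of_nonneg_right hm0D0 hρ0.le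
    have h2 : m0*ρ1 ≤ b := mul_le_mul_of_nonneg_right hm0D1 hρ1.le
    have h3 : m0*S = m0*ρ0 + m0*ρ1 := by rw [hSdef]; ring
    linarith
  have hc8 : 8*v ≤ a+b := by
    have h1 : 8*v/m0 ≤ S := by linarith
    have h2 : 8*v ≤ S*m0 := (div_le_iff₀ hm0).1 h1
    have h3 : S*m0 = m0*S := mul_comm _ _
    linarith
  have hc0 : 0 < a+b := by linarith
  have hcS : a+b ≤ S := by
    have h1 : a ≤ ρ0 := mul_le_of_le_one_left hρ0.le hD01.le
    have h2 : b ≤ ρ1 := mul_le_of_le_one_left hρ1.le hD11.le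
    rw [hSdef]; linarith
  -- the optimal diagonal probability
  set ps := (1 + Real.sqrt (1 - 4*v/(a+b)))/2 with hpsdef
  have h4vc : 4*v/(a+b) ≤ 1/2 := by rw [div_le_iff₀ hc0]; linarith
  have hargnn : 0 ≤ 1 - 4*v/(a+b) := by linarith
  have hsq : Real.sqrt (1 - 4*v/(a+b))^2 = 1 - 4*v/(a+b) := Real.sq_sqrt hargnn
  have hsqnn : 0 ≤ Real.sqrt (1 - 4*v/(a+b)) := Real.sqrt_nonneg _
  have hps2 : 1/2 ≤ ps := by rw [hpsdef]; linarith
  have hsqlt : Real.sqrt (1 - 4*v/(a+b)) < 1 := by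
    have harg1 : 1 - 4*v/(a+b) < 1 := by
      have := div_pos (show (0:ℝ) < 4*v by linarith) hc0
      linarith
    calc Real.sqrt (1 - 4*v/(a+b)) < Real.sqrt 1 := Real.sqrt_lt_sqrt hargnn harg1
      _ = 1 := Real.sqrt_one
  have hps1 : ps < 1 := by rw [hpsdef]; linarith
  have hpseq : ps*(1-ps) = v/(a+b) := by
    rw [hpsdef]; linear_combination (-(1:ℝ)/4) * hsq
  have hps0 : 0 < ps := by linarith
  have hps1' : 0 < 1 - ps := by linarith
  -- lower bounds on a and b
  have hρ0m : α*S ≤ ρ0 := le_trans hmin (min_le_left _ _)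
  have hρ1m : α*S ≤ ρ1 := le_trans hmin (min_le_right _ _)
  have ha1 : β*S ≤ a := by
    have h := mul_le_mul hm0D0 hρ0m (by positivity) hD00.le
    calc β*S = m0*(α*S) := by rw [hβdef]; ring
      _ ≤ D0*ρ0 := h
  have hb1 : β*S ≤ b := by
    have h := mul_le_mul hm0D1 hρ1m (by positivity) hD10.le
    calc β*S = m0*(α*S) := by rw [hβdef]; ring
      _ ≤ D1*ρ1 := h
  -- the key gap estimate
  have hkey : v + v*(Real.log S - Real.log v) < β*S := by
    apply key_gap v β S hv hβ0 hβh hS0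
    have h1 : 16*v/β^2 ≤ S := by linarith
    have h2 : 16*v ≤ S*β^2 := (div_le_iff₀ (by positivity)).1 h1
    linarith [mul_comm S (β^2)]
  -- the gap between the corner values and the diagonal optimum
  have hgap : max a b < (a+b)*ps - v*(Real.log ps - Real.log (1-ps)) := by
    set ph := 1 - v/(a+b) with hphdef
    have hvc8 : v/(a+b) ≤ 1/8 := by rw [div_le_iff₀ hc0]; linarith
    have hvc0 : 0 < v/(a+b) := by positivity
    have hph2 : 1/2 ≤ ph := by rw [hphdef]; linarith
    have hph1 : ph < 1 := by rw [hphdef]; linarith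
    have hphle := phi_le' (a+b) v ps hv hc0 hpseq hps2 hps1 ph ⟨hph2, hph1⟩
    have hph0 : (0:ℝ) ≤ ph := le_trans (by norm_num) hph2
    have hlogph : Real.log ph ≤ 0 := Real.log_nonpos hph0 hph1.le
    have h1ph : 1 - ph = v/(a+b) := by rw [hphdef]; ring
    have hlog1ph : Real.log (1-ph) = Real.log v - Real.log (a+b) := by
      rw [h1ph, Real.log_div (ne_of_gt hv) (ne_of_gt hc0)]
    have hlogcS : Real.log (a+b) ≤ Real.log S := Real.log_le_log hc0 hcS
    have hcph : (a+b)*ph = (a+b) - v := by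
      rw [hphdef]; field_simp
    calc max a b ≤ (a+b) - β*S := by
          apply max_le
          · linarith
          · linarith
      _ < (a+b) - v - v*(Real.log S - Real.log v) := by linarith
      _ ≤ (a+b)*ph - v*(Real.log ph - Real.log (1-ph)) := by
          rw [hcph, hlog1ph]
          have hv1 : v*Real.log ph ≤ 0 := mul_nonpos_of_nonneg_of_nonpos hv.le hlogph
          have hv2 : v*Real.log (a+b) ≤ v*Real.log S :=
            mul_le_mul_of_nonneg_left hlogcS hv.le
          linarith [hv1, hv2]
      _ ≤ (a+b)*ps - v*(Real.log ps - Real.log (1-ps)) := hphle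
  -- the value at the diagonal point
  have hval : uPriv D0 D1 ρ0 ρ1 v ps ps
      = (a+b)*ps - v*(Real.log ps - Real.log (1-ps)) := by
    rw [uPriv, Xgame_diag ps hps2 hps1, Real.log_div (ne_of_gt hps0) (ne_of_gt hps1')]
    ring
  refine ⟨ps, hps2, hps1, Or.inl ⟨⟨hps0, hps1⟩, ⟨hps0, hps1⟩⟩, ?_, ?_⟩
  · intro s hs
    rcases hs with h | h
    · obtain ⟨h1, h2⟩ := h
      have := (interior_bound a b v s.1 s.2 ps hv ha hb h1 h2 hpseq hps2 hps1 hgap).1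
      rw [hval, uPriv]
      exact this
    · simp only [Set.mem_insert_iff, Set.mem_singleton_iff] at h
      rcases h with h | h <;> rw [h, hval, uPriv]
      · rw [Xgame_corner1]
        simp only [Real.log_one]
        have := le_max_left a b
        linarith [hgap, this]
      · rw [Xgame_corner2]
        simp only [Real.log_one]
        have := le_max_right a b
        linarith [hgap, this]
  · intro s hs heq
    rcases hs with h | h
    · obtain ⟨h1, h2⟩ := h
      rw [hval, uPriv] at heq
      have := (interior_bound a b v s.1 s.2 ps hv ha hb h1 h2 hpseq hps2 hps1 hgap).2 heq
      exact Prod.ext this.1 this.2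
    · simp only [Set.mem_insert_iff, Set.mem_singleton_iff] at h
      exfalso
      rcases h with h | h <;> rw [h, hval, uPriv] at heq
      · rw [Xgame_corner1] at heq
        simp only [Real.log_one] at heq
        have := le_max_left a b
        linarith [hgap, this]
      · rw [Xgame_corner2] at heq
        simp only [Real.log_one] at heq
        have := le_max_right a b
        linarith [hgap, this]
end

section
/- Let v > 0 and Y > 4v. The function φ(p) = Y·p − v·ln(p/(1−p)) on the interval [1/2, 1) attains a strict unique maximum at p* = (1 + √(1 − 4v/Y))/2; that is, p* ∈ [1/2,1) and φ(p) < φ(p*) for every p ∈ [1/2, 1) with p ≠ p*. -/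
/-- For `Y > 4v > 0`, the function `φ(p) = Y·p − v·ln(p/(1−p))` on `[1/2, 1)`
attains a strict unique maximum at `p* = (1 + √(1 − 4v/Y))/2`. -/
theorem symmetric_strategy_unique_max (v Y : ℝ) (hv : 0 < v) (hY : 4 * v < Y) :
    (1 + Real.sqrt (1 - 4 * v / Y)) / 2 ∈ Set.Ico (1/2 : ℝ) 1 ∧
    ∀ p ∈ Set.Ico (1/2 : ℝ) 1, p ≠ (1 + Real.sqrt (1 - 4 * v / Y)) / 2 →
      Y * p - v * Real.log (p / (1 - p)) <
        Y * ((1 + Real.sqrt (1 - 4 * v / Y)) / 2) -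
          v * Real.log (((1 + Real.sqrt (1 - 4 * v / Y)) / 2) /
            (1 - (1 + Real.sqrt (1 - 4 * v / Y)) / 2)) := by
  have hY0 : 0 < Y := by linarith
  set s := Real.sqrt (1 - 4 * v / Y) with hs
  have h0 : 0 < 1 - 4 * v / Y := by
    have : 4 * v / Y < 1 := (div_lt_one hY0).mpr hY
    linarith
  have hsq : s ^ 2 = 1 - 4 * v / Y := Real.sq_sqrt h0.le
  have hs0 : 0 < s := Real.sqrt_pos.mpr h0
  have hs1 : s < 1 := by nlinarith [div_pos (show (0:ℝ) < 4*v by linarith) hY0]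
  set q := (1 + s) / 2 with hq
  have hq_half : 1/2 < q := by rw [hq]; linarith
  have hq1 : q < 1 := by rw [hq]; linarith
  have hq0 : 0 < q := by linarith
  have hpq : q * (1 - q) * Y = v := by
    have h : q * (1 - q) = (1 - s ^ 2) / 4 := by rw [hq]; ring
    rw [h, hsq]
    field_simp
    ring
  set ψ : ℝ → ℝ := fun p => Y * p - v * (Real.log p - Real.log (1 - p)) with hψ
  have hderiv : ∀ x ∈ Set.Ioo (0:ℝ) 1,
      HasDerivAt ψ ((Y * (x * (1 - x)) - v) / (x * (1 - x))) x := by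
    intro x hx
    obtain ⟨hx0, hx1⟩ := hx
    have h1x : (0:ℝ) < 1 - x := by linarith
    have d1 : HasDerivAt Real.log (1/x) x := by
      simpa [one_div] using Real.hasDerivAt_log hx0.ne'
    have d2 : HasDerivAt (fun p : ℝ => Real.log (1 - p)) (-(1/(1-x))) x := by
      have hi : HasDerivAt (fun p : ℝ => 1 - p) (-1) x := by
        simpa using (hasDerivAt_id x).const_sub 1
      have := (Real.hasDerivAt_log h1x.ne').comp x hi
      simpa [one_div, Function.comp_def] using this
    have d3 : HasDerivAt ψ (Y * 1 - v * (1/x - -(1/(1-x)))) x := by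
      exact ((hasDerivAt_id x).const_mul Y).sub ((d1.sub d2).const_mul v)
    convert d3 using 1
    field_simp
    ring
  have hmono : StrictMonoOn ψ (Set.Icc (1/2) q) := by
    apply strictMonoOn_of_deriv_pos (convex_Icc _ _)
    · intro x hx
      have hx0 : 0 < x := by have := hx.1; linarith
      have hx1 : x < 1 := by have := hx.2; linarith
      exact (hderiv x ⟨hx0, hx1⟩).continuousAt.continuousWithinAt
    · intro x hx
      rw [interior_Icc] at hx
      obtain ⟨hxl, hxr⟩ := hx
      have hx0 : 0 < x := by linarith
      have hx1 : x < 1 := by linarith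
      rw [(hderiv x ⟨hx0, hx1⟩).deriv]
      apply div_pos
      · nlinarith [mul_pos (mul_pos hY0 (show (0:ℝ) < q - x by linarith))
          (show (0:ℝ) < x + q - 1 by linarith)]
      · exact mul_pos hx0 (by linarith)
  have hanti : StrictAntiOn ψ (Set.Ico q 1) := by
    apply strictAntiOn_of_deriv_neg (convex_Ico _ _)
    · intro x hx
      have hx0 : 0 < x := by have := hx.1; linarith
      exact (hderiv x ⟨hx0, hx.2⟩).continuousAt.continuousWithinAt
    · intro x hx
      rw [interior_Ico] at hx
      obtain ⟨hxl, hxr⟩ := hx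
      have hx0 : 0 < x := by linarith
      rw [(hderiv x ⟨hx0, hxr⟩).deriv]
      apply div_neg_of_neg_of_pos
      · nlinarith [mul_pos (mul_pos hY0 (show (0:ℝ) < x - q by linarith))
          (show (0:ℝ) < x + q - 1 by linarith)]
      · exact mul_pos hx0 (by linarith)
  have hval : ∀ x ∈ Set.Ioo (0:ℝ) 1,
      Y * x - v * Real.log (x / (1 - x)) = ψ x := by
    intro x hx
    rw [hψ]
    rw [Real.log_div hx.1.ne' (by have := hx.2; intro h; linarith [h] : (1:ℝ) - x ≠ 0)]
  refine ⟨⟨by linarith, hq1⟩, ?_⟩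
  intro p hp hne
  obtain ⟨hp1, hp2⟩ := hp
  have hp0 : 0 < p := by linarith
  rw [hval p ⟨hp0, hp2⟩, hval q ⟨hq0, hq1⟩]
  rcases lt_or_gt_of_ne hne with h | h
  · exact hmono ⟨hp1, h.le⟩ ⟨hq_half.le, le_refl q⟩ h
  · exact hanti ⟨le_refl q, hq1⟩ ⟨h.le, hp2⟩ h
end

section
/- Let g : ℝ → ℝ be twice differentiable with g''(x) > 0 and g(x) = g(1−x) for all x ∈ [0,1], and define h(z) := g(z) − (z − 1/2)·g'(z). If z1, z2 ∈ [0,1] satisfy z1 < z2 and h(z1) = h(z2), then z2 = 1 − z1 (and hence z1 < 1/2 < z2). -/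
/-- For a symmetric strictly convex generator `g`, if the expected uniform payoff
`h(z) = g(z) − (z − 1/2)·g'(z)` agrees on `z1 < z2` in `[0,1]`, then `z2 = 1 − z1`
(and hence `z1 < 1/2 < z2`). -/
theorem symmetric_scoring_equal_values (g g' g'' : ℝ → ℝ)
    (hg' : ∀ x : ℝ, HasDerivAt g (g' x) x)
    (hg'' : ∀ x : ℝ, HasDerivAt g' (g'' x) x)
    (hpos : ∀ x ∈ Set.Icc (0:ℝ) 1, 0 < g'' x)
    (hsym : ∀ x ∈ Set.Icc (0:ℝ) 1, g x = g (1 - x))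
    (z1 z2 : ℝ) (hz1 : z1 ∈ Set.Icc (0:ℝ) 1) (hz2 : z2 ∈ Set.Icc (0:ℝ) 1)
    (hlt : z1 < z2)
    (heq : g z1 - (z1 - 1/2) * g' z1 = g z2 - (z2 - 1/2) * g' z2) :
    z2 = 1 - z1 ∧ z1 < 1/2 ∧ 1/2 < z2 := by
  set h : ℝ → ℝ := fun x => g x - (x - 1/2) * g' x with hh
  have hder : ∀ x : ℝ, HasDerivAt h ((1/2 - x) * g'' x) x := by
    intro x
    have h1 : HasDerivAt (fun y : ℝ => (y - 1/2) * g' y)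
        (1 * g' x + (x - 1/2) * g'' x) x :=
      (((hasDerivAt_id x).sub_const _).mul (hg'' x))
    have := (hg' x).sub h1
    exact this.congr_deriv (by ring)
  have hcont : Continuous h := by
    rw [continuous_iff_continuousAt]
    exact fun x => (hder x).continuousAt
  have hderiv : ∀ x : ℝ, deriv h x = (1/2 - x) * g'' x := fun x => (hder x).deriv
  -- strict monotonicity
  have hmono : StrictMonoOn h (Set.Icc (0:ℝ) (1/2)) := by
    apply strictMonoOn_of_deriv_pos (convex_Icc _ _) hcont.continuousOn
    intro x hx
    rw [interior_Icc] at hx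
    rw [hderiv]
    have hx01 : x ∈ Set.Icc (0:ℝ) 1 := ⟨le_of_lt hx.1, by linarith [hx.2]⟩
    have := hpos x hx01
    nlinarith [hx.2]
  have hanti : StrictAntiOn h (Set.Icc (1/2:ℝ) 1) := by
    apply strictAntiOn_of_deriv_neg (convex_Icc _ _) hcont.continuousOn
    intro x hx
    rw [interior_Icc] at hx
    rw [hderiv]
    have hx01 : x ∈ Set.Icc (0:ℝ) 1 := ⟨by linarith [hx.1], le_of_lt hx.2⟩
    have := hpos x hx01
    nlinarith [hx.1]
  have heqh : h z1 = h z2 := heq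
  -- z1 < 1/2
  have hz1half : z1 < 1/2 := by
    by_contra hc
    push_neg at hc
    have : h z2 < h z1 := hanti ⟨hc, hz1.2⟩ ⟨le_trans hc (le_of_lt hlt), hz2.2⟩ hlt
    linarith [heqh.ge, heqh.le, this]
  have hz2half : 1/2 < z2 := by
    by_contra hc
    push_neg at hc
    have : h z1 < h z2 := hmono ⟨hz1.1, le_of_lt (lt_of_lt_of_le hlt hc)⟩ ⟨hz2.1, hc⟩ hlt
    linarith [this]
  -- antisymmetry of g'
  have hphi : ∀ x : ℝ, HasDerivAt (fun y => g y - g (1 - y)) (g' x + g' (1 - x)) x := by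
    intro x
    have h2 : HasDerivAt (fun y : ℝ => g (1 - y)) (g' (1 - x) * (-1)) x := by
      exact (hg' (1 - x)).comp x (((hasDerivAt_id x).const_sub (1:ℝ)))
    have := (hg' x).sub h2
    exact this.congr_deriv (by ring)
  have hgasym : ∀ x ∈ Set.Icc (0:ℝ) 1, g' (1 - x) = - g' x := by
    intro x hx
    have key : g' x + g' (1 - x) = 0 := by
      rcases lt_or_eq_of_le hx.2 with h1 | h1
      · -- x < 1 : use Ici x
        have hw : HasDerivWithinAt (fun y => g y - g (1 - y)) (g' x + g' (1 - x))
            (Set.Ici x) x := (hphi x).hasDerivWithinAt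
        have hw0 : HasDerivWithinAt (fun y => g y - g (1 - y)) 0 (Set.Ici x) x := by
          have hev : (fun y => g y - g (1 - y)) =ᶠ[nhdsWithin x (Set.Ici x)] (fun _ => (0:ℝ)) := by
            filter_upwards [self_mem_nhdsWithin,
              nhdsWithin_le_nhds (Iio_mem_nhds h1)] with y hy1 hy2
            have : y ∈ Set.Icc (0:ℝ) 1 := ⟨le_trans hx.1 hy1, le_of_lt hy2⟩
            simpa [sub_eq_zero] using hsym y this
          exact (hasDerivWithinAt_const x _ (0:ℝ)).congr_of_eventuallyEq hev
            (by simpa [sub_eq_zero] using hsym x hx)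
        have u := (uniqueDiffOn_Ici x) x Set.self_mem_Ici
        have e1 := hw.derivWithin u
        have e2 := hw0.derivWithin u
        rw [← e1]; exact e2
      · -- x = 1 : use Iic x
        have hw : HasDerivWithinAt (fun y => g y - g (1 - y)) (g' x + g' (1 - x))
            (Set.Iic x) x := (hphi x).hasDerivWithinAt
        have hw0 : HasDerivWithinAt (fun y => g y - g (1 - y)) 0 (Set.Iic x) x := by
          have hev : (fun y => g y - g (1 - y)) =ᶠ[nhdsWithin x (Set.Iic x)] (fun _ => (0:ℝ)) := by
            have hx0 : (0:ℝ) < x := by linarith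
            filter_upwards [self_mem_nhdsWithin,
              nhdsWithin_le_nhds (Ioi_mem_nhds hx0)] with y hy1 hy2
            have : y ∈ Set.Icc (0:ℝ) 1 := ⟨le_of_lt hy2, le_trans hy1 hx.2⟩
            simpa [sub_eq_zero] using hsym y this
          exact (hasDerivWithinAt_const x _ (0:ℝ)).congr_of_eventuallyEq hev
            (by simpa [sub_eq_zero] using hsym x hx)
        have u := (uniqueDiffOn_Iic x) x Set.self_mem_Iic
        have e1 := hw.derivWithin u
        have e2 := hw0.derivWithin u
        rw [← e1]; exact e2
    linarith [key]
  -- h (1 - z1) = h z1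
  have hsymh : h (1 - z1) = h z1 := by
    have hga := hgasym z1 hz1
    simp only [hh]
    rw [hsym z1 hz1, hga]
    ring
  -- conclude via injectivity on [1/2, 1]
  have hmem1 : (1 - z1) ∈ Set.Icc (1/2:ℝ) 1 := ⟨by linarith, by linarith [hz1.1]⟩
  have hmem2 : z2 ∈ Set.Icc (1/2:ℝ) 1 := ⟨le_of_lt hz2half, hz2.2⟩
  have : z2 = 1 - z1 := hanti.injOn hmem2 hmem1 (by rw [hsymh, ← heqh])
  exact ⟨this, hz1half, hz2half⟩
end

section
/- Let g : ℝ → ℝ be twice differentiable with g''(x) > 0 and g(x) = g(1−x) for all x ∈ [0,1], and define h(z) := g(z) − (z − 1/2)·g'(z). If z, z' ∈ [0,1] with z' ≤ 1/2 and h(z) ≥ h(z'), then z' ≤ z ≤ 1 − z'. -/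
/-- For a symmetric strictly convex generator `g` with
`h(z) = g(z) − (z − 1/2)·g'(z)`: if `z, z' ∈ [0,1]`, `z' ≤ 1/2` and
`h(z) ≥ h(z')`, then `z' ≤ z ≤ 1 − z'`. -/
theorem symmetric_scoring_sandwich (g g' g'' : ℝ → ℝ)
    (hg' : ∀ x : ℝ, HasDerivAt g (g' x) x)
    (hg'' : ∀ x : ℝ, HasDerivAt g' (g'' x) x)
    (hpos : ∀ x ∈ Set.Icc (0:ℝ) 1, 0 < g'' x)
    (hsym : ∀ x ∈ Set.Icc (0:ℝ) 1, g x = g (1 - x))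
    (z z' : ℝ) (hz : z ∈ Set.Icc (0:ℝ) 1) (hz' : z' ∈ Set.Icc (0:ℝ) 1)
    (hhalf : z' ≤ 1/2)
    (hge : g z' - (z' - 1/2) * g' z' ≤ g z - (z - 1/2) * g' z) :
    z' ≤ z ∧ z ≤ 1 - z' := by
  set h : ℝ → ℝ := fun x => g x - (x - 1/2) * g' x with hh
  have hderiv : ∀ x : ℝ, HasDerivAt h (-(x - 1/2) * g'' x) x := by
    intro x
    have : HasDerivAt h (g' x - (1 * g' x + (x - 1/2) * g'' x)) x :=
      (hg' x).sub (((hasDerivAt_id x).sub_const _).mul (hg'' x))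
    convert this using 1; ring
  have hcont : Continuous h := by
    apply continuous_iff_continuousAt.2
    exact fun x => (hderiv x).differentiableAt.continuousAt
  -- symmetry of g' on [0,1]
  have hg'sym : ∀ x ∈ Set.Icc (0:ℝ) 1, g' x + g' (1 - x) = 0 := by
    have hopen : ∀ x ∈ Set.Ioo (0:ℝ) 1, g' x + g' (1 - x) = 0 := by
      intro x hx
      have hk : HasDerivAt (fun y => g (1 - y)) (g' (1 - x) * (-1)) x :=
        (hg' (1 - x)).comp x (((hasDerivAt_id x).const_sub 1))
      have heq : (fun y => g y) =ᶠ[nhds x] fun y => g (1 - y) := by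
        filter_upwards [isOpen_Ioo.mem_nhds hx] with y hy
        exact hsym y (Set.mem_Icc.2 ⟨le_of_lt hy.1, le_of_lt hy.2⟩)
      have := (hk.congr_of_eventuallyEq heq).unique (hg' x)
      linarith [this]
    have hc : Continuous fun x => g' x + g' (1 - x) := by
      have hgc : Continuous g' := continuous_iff_continuousAt.2
        fun x => (hg'' x).differentiableAt.continuousAt
      exact hgc.add (hgc.comp (continuous_const.sub continuous_id))
    have : Set.EqOn (fun x => g' x + g' (1 - x)) (fun _ => (0:ℝ)) (closure (Set.Ioo (0:ℝ) 1)) :=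
      Set.EqOn.closure hopen hc continuous_const
    rw [closure_Ioo (by norm_num : (0:ℝ) ≠ 1)] at this
    exact fun x hx => this hx
  have hsymh : ∀ x ∈ Set.Icc (0:ℝ) 1, h x = h (1 - x) := by
    intro x hx
    have h1 : (1:ℝ) - x ∈ Set.Icc (0:ℝ) 1 := ⟨by linarith [hx.2], by linarith [hx.1]⟩
    have := hg'sym x hx
    simp only [hh]
    rw [hsym x hx]
    have : g' (1 - x) = -g' x := by linarith
    rw [this]; ring
  -- strict monotonicity on [0, 1/2]
  have hmono : StrictMonoOn h (Set.Icc (0:ℝ) (1/2)) := by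
    apply strictMonoOn_of_deriv_pos (convex_Icc _ _) hcont.continuousOn
    intro x hx
    rw [interior_Icc] at hx
    rw [(hderiv x).deriv]
    have hx01 : x ∈ Set.Icc (0:ℝ) 1 := ⟨le_of_lt hx.1, by linarith [hx.2]⟩
    have := hpos x hx01
    nlinarith [hx.2]
  have hanti : StrictAntiOn h (Set.Icc (1/2:ℝ) 1) := by
    apply strictAntiOn_of_deriv_neg (convex_Icc _ _) hcont.continuousOn
    intro x hx
    rw [interior_Icc] at hx
    rw [(hderiv x).deriv]
    have hx01 : x ∈ Set.Icc (0:ℝ) 1 := ⟨by linarith [hx.1], le_of_lt hx.2⟩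
    have := hpos x hx01
    nlinarith [hx.1]
  have hge' : h z' ≤ h z := hge
  constructor
  · by_contra hlt
    push_neg at hlt
    have : h z < h z' := hmono ⟨hz.1, by linarith⟩ ⟨hz'.1, hhalf⟩ hlt
    linarith
  · by_contra hlt
    push_neg at hlt
    have hmem1 : (1:ℝ) - z' ∈ Set.Icc (1/2:ℝ) 1 := ⟨by linarith, by linarith [hz'.1]⟩
    have hmemz : z ∈ Set.Icc (1/2:ℝ) 1 := ⟨by linarith [hmem1.1], hz.2⟩
    have : h z < h (1 - z') := hanti hmem1 hmemz hlt
    rw [← hsymh z' hz'] at this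
    linarith
end

section
/- In the scoring-rule coupon game, assume f1(D0) − f1(D1) < ρ < f1(1) − f1(0). Then every Bayesian Nash equilibrium (p, q, x0, x1) satisfies p, q ∈ (0,1) and the posterior-symmetry identity D0·p/(D0·p + D1·(1−q)) = D1·q/(D0·(1−p) + D1·q); equivalently, D0²·p·(1−p) = D1²·q·(1−q). (That is, A's posterior belief that B's type matches the signal is the same after either signal.) -/
open Set

/-- Strict tangent-line inequality for a function with strictly increasing
derivative on `[0,1]`. -/
private lemma tangent_lt (g g' : ℝ → ℝ) (hg' : ∀ x : ℝ, HasDerivAt g (g' x) x)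
    (hmono : StrictMonoOn g' (Set.Icc 0 1)) {x y : ℝ}
    (hx : x ∈ Set.Icc (0:ℝ) 1) (hy : y ∈ Set.Icc (0:ℝ) 1) (hne : x ≠ y) :
    g x + (y - x) * g' x < g y := by
  have gcont : Continuous g := Differentiable.continuous (fun z => (hg' z).differentiableAt)
  rcases lt_or_gt_of_ne hne with h | h
  · obtain ⟨c, hc, hc'⟩ := exists_hasDerivAt_eq_slope g g' h gcont.continuousOn
      (fun z _ => hg' z)
    have hcI : c ∈ Set.Icc (0:ℝ) 1 := ⟨le_trans hx.1 hc.1.le, le_trans hc.2.le hy.2⟩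
    have hlt : g' x < g' c := hmono hx hcI hc.1
    have hyx : 0 < y - x := by linarith
    have h2 : g y - g x = g' c * (y - x) := by
      rw [hc']; field_simp
    nlinarith [mul_lt_mul_of_pos_right hlt hyx]
  · obtain ⟨c, hc, hc'⟩ := exists_hasDerivAt_eq_slope g g' h gcont.continuousOn
      (fun z _ => hg' z)
    have hcI : c ∈ Set.Icc (0:ℝ) 1 := ⟨le_trans hy.1 hc.1.le, le_trans hc.2.le hx.2⟩
    have hlt : g' c < g' x := hmono hcI hx hc.2
    have hyx : 0 < x - y := by linarith
    have h2 : g x - g y = g' c * (x - y) := by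
      rw [hc']; field_simp
    nlinarith [mul_lt_mul_of_pos_right hlt hyx]

/-- The unique best response of the reporting agent: if `x*` maximizes
`a·f0 + b·f1` on `[0,1]` (with `f0, f1` the scoring rule induced by `g`),
then `x* = b/(a+b)`. -/
private lemma best_response_eq (g g' : ℝ → ℝ) (hg' : ∀ x : ℝ, HasDerivAt g (g' x) x)
    (hmono : StrictMonoOn g' (Set.Icc 0 1)) (a b xs : ℝ) (ha : 0 ≤ a) (hb : 0 ≤ b)
    (hab : 0 < a + b) (hxs : xs ∈ Set.Icc (0:ℝ) 1)
    (hmax : ∀ x ∈ Set.Icc (0:ℝ) 1,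
      a * (g x - x * g' x) + b * (g x + (1 - x) * g' x)
        ≤ a * (g xs - xs * g' xs) + b * (g xs + (1 - xs) * g' xs)) :
    xs = b / (a + b) := by
  set c := b / (a + b) with hcdef
  have hc0 : 0 ≤ c := div_nonneg hb hab.le
  have hc1 : c ≤ 1 := by rw [hcdef, div_le_one hab]; linarith
  have hbc : b = (a + b) * c := by rw [hcdef]; field_simp
  by_contra hne
  have key : g xs + (c - xs) * g' xs < g c :=
    tangent_lt g g' hg' hmono hxs ⟨hc0, hc1⟩ hne
  have key2 : (a + b) * (g xs + (c - xs) * g' xs) < (a + b) * g c :=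
    mul_lt_mul_of_pos_left key hab
  have h1 := hmax c ⟨hc0, hc1⟩
  have e1 : a * (g c - c * g' c) + b * (g c + (1 - c) * g' c) = (a + b) * g c := by
    linear_combination (g' c) * hbc
  have e2 : a * (g xs - xs * g' xs) + b * (g xs + (1 - xs) * g' xs)
      = (a + b) * (g xs + (c - xs) * g' xs) := by
    linear_combination (g' xs) * hbc
  rw [e1, e2] at h1
  exact absurd h1 (not_le.mpr key2)


set_option maxHeartbeats 1000000 in
/-- In the scoring-rule coupon game with a symmetric proper scoring rule and
`f1(D0) − f1(D1) < ρ < f1(1) − f1(0)`, every Bayesian Nash equilibrium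
`(p, q, x0, x1)` has `p, q ∈ (0,1)` and satisfies the posterior-symmetry
identity (equivalently `D0²·p·(1−p) = D1²·q·(1−q)`). -/
theorem scoring_rule_BNE_posterior_symmetry (g g' g'' : ℝ → ℝ)
    (hg' : ∀ x : ℝ, HasDerivAt g (g' x) x)
    (hg'' : ∀ x : ℝ, HasDerivAt g' (g'' x) x)
    (hpos : ∀ x ∈ Set.Icc (0:ℝ) 1, 0 < g'' x)
    (hsym : ∀ x ∈ Set.Icc (0:ℝ) 1, g x = g (1 - x))
    (f0 f1 : ℝ → ℝ)
    (hf0 : ∀ x, f0 x = g x - x * g' x)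
    (hf1 : ∀ x, f1 x = g x + (1 - x) * g' x)
    (D0 D1 ρ : ℝ) (hD1 : 0 < D1) (hD : D1 ≤ D0) (hsum : D0 + D1 = 1)
    (hρpos : 0 < ρ)
    (hρlo : f1 D0 - f1 D1 < ρ) (hρhi : ρ < f1 1 - f1 0)
    (p q x0 x1 : ℝ)
    (hp : p ∈ Set.Icc (0:ℝ) 1) (hq : q ∈ Set.Icc (0:ℝ) 1)
    (hx0 : x0 ∈ Set.Icc (0:ℝ) 1) (hx1 : x1 ∈ Set.Icc (0:ℝ) 1)
    -- (i) A's reports (x0, x1) are a best response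
    (hA : ∀ x0' ∈ Set.Icc (0:ℝ) 1, ∀ x1' ∈ Set.Icc (0:ℝ) 1,
      D0 * (p * f0 x0' + (1 - p) * f0 x1') + D1 * ((1 - q) * f1 x0' + q * f1 x1')
        ≤ D0 * (p * f0 x0 + (1 - p) * f0 x1) + D1 * ((1 - q) * f1 x0 + q * f1 x1))
    -- (ii) p is a best response for the type-0 B agent
    (hB0 : ∀ p' ∈ Set.Icc (0:ℝ) 1,
      p' * (ρ - f0 x0) - (1 - p') * f0 x1 ≤ p * (ρ - f0 x0) - (1 - p) * f0 x1)
    -- (iii) q is a best response for the type-1 B agent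
    (hB1 : ∀ q' ∈ Set.Icc (0:ℝ) 1,
      q' * (ρ - f1 x1) - (1 - q') * f1 x0 ≤ q * (ρ - f1 x1) - (1 - q) * f1 x0) :
    p ∈ Set.Ioo (0:ℝ) 1 ∧ q ∈ Set.Ioo (0:ℝ) 1 ∧
    D0 * p / (D0 * p + D1 * (1 - q)) = D1 * q / (D0 * (1 - p) + D1 * q) ∧
    D0 ^ 2 * p * (1 - p) = D1 ^ 2 * q * (1 - q) := by
  -- basic numerics
  have hD0 : 0 < D0 := lt_of_lt_of_le hD1 hD
  have hD1h : D1 ≤ 1 / 2 := by linarith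
  have hD0h : (1:ℝ) / 2 ≤ D0 := by linarith
  have hD0lt1 : D0 < 1 := by linarith
  -- continuity / monotonicity facts
  have g'cont : Continuous g' := Differentiable.continuous (fun z => (hg'' z).differentiableAt)
  have g'mono : StrictMonoOn g' (Set.Icc 0 1) := by
    apply strictMonoOn_of_deriv_pos (convex_Icc 0 1) g'cont.continuousOn
    intro x hx
    rw [interior_Icc] at hx
    rw [(hg'' x).deriv]
    exact hpos x ⟨hx.1.le, hx.2.le⟩
  -- symmetry of g'
  have gsym' : ∀ x ∈ Set.Icc (0:ℝ) 1, g' (1 - x) = - g' x := by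
    have hIoo : Set.EqOn (fun x => g' x + g' (1 - x)) (fun _ => (0:ℝ)) (Set.Ioo 0 1) := by
      intro x hx
      have hd : HasDerivAt (fun y => g y - g (1 - y)) (g' x + g' (1 - x)) x := by
        have h2 : HasDerivAt (fun y : ℝ => g (1 - y)) (g' (1 - x) * (-1)) x :=
          HasDerivAt.comp x (hg' (1 - x))
            (by exact (hasDerivAt_id x).const_sub 1)
        have h3 : HasDerivAt (fun y => g y - g (1 - y)) (g' x - g' (1 - x) * (-1)) x :=
          (hg' x).sub h2
        convert h3 using 1
        ring
      have hzero : HasDerivAt (fun y => g y - g (1 - y)) 0 x := by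
        apply (hasDerivAt_const x (0:ℝ)).congr_of_eventuallyEq
        filter_upwards [Ioo_mem_nhds hx.1 hx.2] with y hy
        have := hsym y ⟨hy.1.le, hy.2.le⟩
        show g y - g (1 - y) = 0
        linarith
      have := hd.unique hzero
      simpa using this
    have hclos := hIoo.closure
      (g'cont.add (g'cont.comp (continuous_const.sub continuous_id))) continuous_const
    rw [closure_Ioo (by norm_num : (0:ℝ) ≠ 1)] at hclos
    intro x hx
    have := hclos hx
    simp only at this
    linarith [this]
-- derivative facts for f0, f1
  have hdf0 : ∀ x : ℝ, HasDerivAt f0 (-(x * g'' x)) x := by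
    intro x
    have h1 : HasDerivAt (fun y : ℝ => g y - y * g' y)
        (g' x - (1 * g' x + x * g'' x)) x :=
      (hg' x).sub ((hasDerivAt_id x).mul (hg'' x))
    have h2 : HasDerivAt (fun y : ℝ => g y - y * g' y) (-(x * g'' x)) x := by
      convert h1 using 1; ring
    exact (funext hf0 : f0 = _) ▸ h2
  have hdf1 : ∀ x : ℝ, HasDerivAt f1 ((1 - x) * g'' x) x := by
    intro x
    have h1 : HasDerivAt (fun y : ℝ => g y + (1 - y) * g' y)
        (g' x + ((0 - 1) * g' x + (1 - x) * g'' x)) x :=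
      (hg' x).add (((hasDerivAt_const x (1:ℝ)).sub (hasDerivAt_id x)).mul (hg'' x))
    have h2 : HasDerivAt (fun y : ℝ => g y + (1 - y) * g' y) ((1 - x) * g'' x) x := by
      convert h1 using 1; ring
    exact (funext hf1 : f1 = _) ▸ h2
  have f0cont : Continuous f0 :=
    Differentiable.continuous (fun z => (hdf0 z).differentiableAt)
  have f1cont : Continuous f1 :=
    Differentiable.continuous (fun z => (hdf1 z).differentiableAt)
  have f1mono : StrictMonoOn f1 (Set.Icc 0 1) := by
    apply strictMonoOn_of_deriv_pos (convex_Icc 0 1) f1cont.continuousOn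
    intro x hx
    rw [interior_Icc] at hx
    rw [(hdf1 x).deriv]
    have := hpos x ⟨hx.1.le, hx.2.le⟩
    have : (0:ℝ) < 1 - x := by linarith [hx.2]
    exact mul_pos this (hpos x ⟨hx.1.le, hx.2.le⟩)
  have f0anti : StrictAntiOn f0 (Set.Icc 0 1) := by
    apply strictAntiOn_of_deriv_neg (convex_Icc 0 1) f0cont.continuousOn
    intro x hx
    rw [interior_Icc] at hx
    rw [(hdf0 x).deriv]
    have := mul_pos hx.1 (hpos x ⟨hx.1.le, hx.2.le⟩)
    linarith
  -- the "sum" function T = f0 + f1 is strictly increasing on [0, 1/2] and symmetric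
  have Tmono' : StrictMonoOn (fun x => f0 x + f1 x) (Set.Icc 0 (1/2)) := by
    apply strictMonoOn_of_deriv_pos (convex_Icc 0 (1/2)) (f0cont.add f1cont).continuousOn
    intro x hx
    rw [interior_Icc] at hx
    rw [((hdf0 x).add (hdf1 x)).deriv]
    have hg''x := hpos x ⟨hx.1.le, by linarith [hx.2]⟩
    nlinarith [hx.1, hx.2]
  have Tmono : ∀ a ∈ Set.Icc (0:ℝ) (1/2), ∀ b ∈ Set.Icc (0:ℝ) (1/2), a < b →
      f0 a + f1 a < f0 b + f1 b := fun a ha b hb hab => Tmono' ha hb hab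
  have Tsym : ∀ x ∈ Set.Icc (0:ℝ) 1, f0 (1 - x) + f1 (1 - x) = f0 x + f1 x := by
    intro x hx
    have hg1 := hsym x hx
    have hg2 := gsym' x hx
    simp only [hf0, hf1]
    rw [hg2, ← hg1]
    ring
  -- T is strictly greater inside (0,1) than at the endpoints
  have hT0lt : ∀ x ∈ Set.Ioo (0:ℝ) 1, f0 0 + f1 0 < f0 x + f1 x := by
    intro x hx
    rcases le_or_gt x (1/2) with h | h
    · exact Tmono 0 ⟨le_refl 0, by norm_num⟩ x ⟨hx.1.le, h⟩ hx.1
    · have hs := Tsym x ⟨hx.1.le, hx.2.le⟩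
      have h2 : f0 0 + f1 0 < f0 (1-x) + f1 (1-x) :=
        Tmono 0 ⟨le_refl 0, by norm_num⟩ (1-x) ⟨by linarith [hx.2], by linarith⟩
          (by linarith [hx.2])
      linarith
  -- non-strict versions of monotonicity
  have f1le : ∀ a ∈ Set.Icc (0:ℝ) 1, ∀ b ∈ Set.Icc (0:ℝ) 1, a ≤ b → f1 a ≤ f1 b := by
    intro a ha b hb hab
    rcases eq_or_lt_of_le hab with rfl | h
    · exact le_refl _
    · exact (f1mono ha hb h).le
  have f0le : ∀ a ∈ Set.Icc (0:ℝ) 1, ∀ b ∈ Set.Icc (0:ℝ) 1, a ≤ b → f0 b ≤ f0 a := by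
    intro a ha b hb hab
    rcases eq_or_lt_of_le hab with rfl | h
    · exact le_refl _
    · exact (f0anti ha hb h).le
  -- B-side slope inequalities
  have hs0lo : 0 ≤ p * (ρ - f0 x0 + f0 x1) := by
    have h := hB0 0 (by norm_num)
    nlinarith [h]
  have hs0hi : (1 - p) * (ρ - f0 x0 + f0 x1) ≤ 0 := by
    have h := hB0 1 (by norm_num)
    nlinarith [h]
  have hs1lo : 0 ≤ q * (ρ - f1 x1 + f1 x0) := by
    have h := hB1 0 (by norm_num)
    nlinarith [h]
  have hs1hi : (1 - q) * (ρ - f1 x1 + f1 x0) ≤ 0 := by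
    have h := hB1 1 (by norm_num)
    nlinarith [h]
  -- A-side best responses
  have hx0br : 0 < D0 * p + D1 * (1 - q) →
      x0 = D1 * (1 - q) / (D0 * p + D1 * (1 - q)) := by
    intro hW
    apply best_response_eq g g' hg' g'mono (D0 * p) (D1 * (1 - q)) x0
      (mul_nonneg hD0.le hp.1) (mul_nonneg hD1.le (by linarith [hq.2])) hW hx0
    intro x hx
    have h := hA x hx x1 hx1
    have h2 : D0 * p * f0 x + D1 * (1 - q) * f1 x
        ≤ D0 * p * f0 x0 + D1 * (1 - q) * f1 x0 := by nlinarith [h]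
    simpa only [hf0, hf1] using h2
  have hx1br : 0 < D0 * (1 - p) + D1 * q →
      x1 = D1 * q / (D0 * (1 - p) + D1 * q) := by
    intro hW
    apply best_response_eq g g' hg' g'mono (D0 * (1 - p)) (D1 * q) x1
      (mul_nonneg hD0.le (by linarith [hp.2])) (mul_nonneg hD1.le hq.1) hW hx1
    intro x hx
    have h := hA x0 hx0 x hx
    have h2 : D0 * (1 - p) * f0 x + D1 * q * f1 x
        ≤ D0 * (1 - p) * f0 x1 + D1 * q * f1 x1 := by nlinarith [h]
    simpa only [hf0, hf1] using h2
  -- endpoint identities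
  have e01 : f0 0 = f1 1 := by
    simp only [hf0, hf1]
    have := hsym 0 ⟨le_refl 0, by norm_num⟩
    norm_num at this ⊢
    linarith
  have e10 : f0 1 = f1 0 := by
    simp only [hf0, hf1]
    have h1 := hsym 0 ⟨le_refl 0, by norm_num⟩
    have h2 := gsym' 0 ⟨le_refl 0, by norm_num⟩
    norm_num at h1 h2 ⊢
    linarith
  -- Corner elimination 1 : q < 1
  have hq1 : q < 1 := by
    by_contra hcon
    push_neg at hcon
    have hq1' : q = 1 := le_antisymm hq.2 hcon
    subst hq1'
    have hs1 : 0 ≤ ρ - f1 x1 + f1 x0 := by nlinarith [hs1lo]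
    have hW1 : 0 < D0 * (1 - p) + D1 * 1 := by nlinarith [hp.2]
    have hx1v := hx1br hW1
    rcases eq_or_lt_of_le hp.1 with hp0 | hp0
    · -- p = 0, everyone sends signal 1
      have hp0' : p = 0 := hp0.symm
      subst hp0'
      have hden : D0 * (1 - 0) + D1 * 1 = 1 := by linarith
      have hx1D : x1 = D1 := by rw [hx1v, hden]; norm_num
      have hs0 : ρ - f0 x0 + f0 x1 ≤ 0 := by nlinarith [hs0hi]
      rw [hx1D] at hs0 hs1
      have hx0lt : x0 < D1 := by
        by_contra hc
        push_neg at hc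
        have := f0le D1 ⟨hD1.le, by linarith⟩ x0 hx0 hc
        linarith
      have hTlt : f0 x0 + f1 x0 < f0 D1 + f1 D1 :=
        Tmono x0 ⟨hx0.1, by linarith⟩ D1 ⟨hD1.le, hD1h⟩ hx0lt
      linarith
    · -- p > 0 : x0 = 0
      have hW0 : 0 < D0 * p + D1 * (1 - 1) := by nlinarith [mul_pos hD0 hp0]
      have hx0v := hx0br hW0
      have hx0z : x0 = 0 := by rw [hx0v]; norm_num
      rcases eq_or_lt_of_le hp.2 with hp1 | hp1
      · -- p = 1 : fully separating, contradicts ρ < f1 1 - f1 0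
        have hp1' : p = 1 := hp1
        subst hp1'
        have hden : D0 * (1 - 1) + D1 * 1 = D1 := by ring
        have hx1o : x1 = 1 := by rw [hx1v, hden, mul_one]; exact div_self hD1.ne'
        have hs0 : 0 ≤ ρ - f0 x0 + f0 x1 := by nlinarith [hs0lo]
        rw [hx0z, hx1o] at hs0
        rw [e01, e10] at hs0
        linarith
      · -- 0 < p < 1
        have hs0 : ρ - f0 x0 + f0 x1 ≤ 0 := by nlinarith [hs0hi, hp1]
        have hx1mem : x1 ∈ Set.Ioo (0:ℝ) 1 := by
          rw [hx1v]
          constructor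
          · exact div_pos (by linarith) hW1
          · rw [div_lt_one hW1]
            nlinarith [mul_pos hD0 (by linarith : (0:ℝ) < 1 - p)]
        have hT := hT0lt x1 hx1mem
        rw [hx0z] at hs0 hs1
        linarith
  -- Corner elimination 2 : 0 < q
  have hq0 : 0 < q := by
    by_contra hcon
    push_neg at hcon
    have hq0' : q = 0 := le_antisymm hcon hq.1
    subst hq0'
    have hs1 : ρ - f1 x1 + f1 x0 ≤ 0 := by nlinarith [hs1hi]
    rcases eq_or_lt_of_le hp.2 with hp1 | hp1
    · -- p = 1 : everyone sends signal 0
      have hp1' : p = 1 := hp1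
      subst hp1'
      have hW0 : 0 < D0 * 1 + D1 * (1 - 0) := by linarith
      have hx0v := hx0br hW0
      have hden : D0 * 1 + D1 * (1 - 0) = 1 := by linarith
      have hx0D : x0 = D1 := by rw [hx0v, hden]; norm_num
      have hs0 : 0 ≤ ρ - f0 x0 + f0 x1 := by nlinarith [hs0lo]
      rw [hx0D] at hs0 hs1
      have hx1gt : D0 < x1 := by
        by_contra hc
        push_neg at hc
        have := f1le x1 hx1 D0 ⟨by linarith, hD0lt1.le⟩ hc
        linarith
      have hTs := Tsym x1 hx1
      have hTlt : f0 (1-x1) + f1 (1-x1) < f0 D1 + f1 D1 :=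
        Tmono (1-x1) ⟨by linarith [hx1.2], by linarith⟩ D1 ⟨hD1.le, hD1h⟩
          (by linarith)
      linarith
    · -- p < 1 : x1 = 0 and ρ ≤ f1 0 - f1 x0 ≤ 0
      have hW1 : 0 < D0 * (1 - p) + D1 * 0 := by
        nlinarith [mul_pos hD0 (by linarith : (0:ℝ) < 1 - p)]
      have hx1v := hx1br hW1
      have hx1z : x1 = 0 := by rw [hx1v]; norm_num
      have hle : f1 0 ≤ f1 x0 := f1le 0 ⟨le_refl 0, by norm_num⟩ x0 hx0 hx0.1
      rw [hx1z] at hs1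
      linarith
  -- Corner elimination 3 : 0 < p
  have hp0 : 0 < p := by
    by_contra hcon
    push_neg at hcon
    have hp0' : p = 0 := le_antisymm hcon hp.1
    subst hp0'
    have hW0 : 0 < D0 * 0 + D1 * (1 - q) := by
      nlinarith [mul_pos hD1 (by linarith : (0:ℝ) < 1 - q)]
    have hx0v := hx0br hW0
    have hx0o : x0 = 1 := by
      rw [hx0v]
      rw [show D0 * 0 + D1 * (1 - q) = D1 * (1 - q) by ring]
      exact div_self (by nlinarith [mul_pos hD1 (by linarith : (0:ℝ) < 1 - q)])
    have hs0 : ρ - f0 x0 + f0 x1 ≤ 0 := by nlinarith [hs0hi]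
    have hle : f0 1 ≤ f0 x1 := f0le x1 hx1 1 ⟨by norm_num, le_refl 1⟩ hx1.2
    rw [hx0o] at hs0
    linarith
  -- Corner elimination 4 : p < 1
  have hp1 : p < 1 := by
    by_contra hcon
    push_neg at hcon
    have hp1' : p = 1 := le_antisymm hp.2 hcon
    subst hp1'
    have hW1 : 0 < D0 * (1 - 1) + D1 * q := by nlinarith [mul_pos hD1 hq0]
    have hx1v := hx1br hW1
    have hx1o : x1 = 1 := by
      rw [hx1v, show D0 * (1 - 1) + D1 * q = D1 * q by ring]
      exact div_self (mul_pos hD1 hq0).ne'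
    have hs1a : 0 ≤ ρ - f1 x1 + f1 x0 := by nlinarith [hs1lo, hq0]
    have hs1b : ρ - f1 x1 + f1 x0 ≤ 0 := by nlinarith [hs1hi, hq1]
    have hs0 : 0 ≤ ρ - f0 x0 + f0 x1 := by nlinarith [hs0lo]
    have hW0 : 0 < D0 * 1 + D1 * (1 - q) := by nlinarith [hq.2]
    have hx0v := hx0br hW0
    have hx0mem : x0 ∈ Set.Ioo (0:ℝ) 1 := by
      rw [hx0v]
      constructor
      · exact div_pos (mul_pos hD1 (by linarith)) hW0
      · rw [div_lt_one hW0]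
        nlinarith [hD0]
    have hT := hT0lt x0 hx0mem
    have hT01 : f0 0 + f1 0 = f0 1 + f1 1 := by
      have := Tsym 1 ⟨by norm_num, le_refl 1⟩
      norm_num at this
      linarith
    rw [hx1o] at hs1b hs0
    linarith
  -- Interior case : indifference conditions
  have hW0 : 0 < D0 * p + D1 * (1 - q) := by
    nlinarith [mul_pos hD0 hp0, mul_nonneg hD1.le (by linarith : (0:ℝ) ≤ 1 - q)]
  have hW1 : 0 < D0 * (1 - p) + D1 * q := by
    nlinarith [mul_pos hD1 hq0, mul_nonneg hD0.le (by linarith : (0:ℝ) ≤ 1 - p)]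
  have hx0v := hx0br hW0
  have hx1v := hx1br hW1
  have hs0 : ρ - f0 x0 + f0 x1 = 0 := by
    have h1 : 0 ≤ ρ - f0 x0 + f0 x1 := by nlinarith [hs0lo, hp0]
    have h2 : ρ - f0 x0 + f0 x1 ≤ 0 := by nlinarith [hs0hi, hp1]
    linarith
  have hs1 : ρ - f1 x1 + f1 x0 = 0 := by
    have h1 : 0 ≤ ρ - f1 x1 + f1 x0 := by nlinarith [hs1lo, hq0]
    have h2 : ρ - f1 x1 + f1 x0 ≤ 0 := by nlinarith [hs1hi, hq1]
    linarith
  have hx01 : x0 < x1 := by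
    by_contra hc
    push_neg at hc
    have := f1le x1 hx1 x0 hx0 hc
    linarith
  have hTeq : f0 x0 + f1 x0 = f0 x1 + f1 x1 := by linarith
  have hxsum : x1 = 1 - x0 := by
    rcases le_or_gt x1 (1/2) with h | h
    · exact absurd hTeq
        (ne_of_lt (Tmono x0 ⟨hx0.1, by linarith⟩ x1 ⟨by linarith [hx0.1], h⟩ hx01))
    · have hTs := Tsym x1 hx1
      rcases lt_trichotomy x0 (1 - x1) with h2 | h2 | h2
      · have : f0 x0 + f1 x0 < f0 (1-x1) + f1 (1-x1) :=
          Tmono x0 ⟨hx0.1, by linarith⟩ (1-x1) ⟨by linarith [hx1.2], by linarith⟩ h2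
        linarith
      · linarith
      · rcases le_or_gt x0 (1/2) with h3 | h3
        · have : f0 (1-x1) + f1 (1-x1) < f0 x0 + f1 x0 :=
            Tmono (1-x1) ⟨by linarith [hx1.2], by linarith⟩ x0 ⟨hx0.1, h3⟩ h2
          linarith
        · have hTs0 := Tsym x0 hx0
          have : f0 (1-x1) + f1 (1-x1) < f0 (1-x0) + f1 (1-x0) :=
            Tmono (1-x1) ⟨by linarith [hx1.2], by linarith⟩ (1-x0)
              ⟨by linarith [hx0.2], by linarith⟩ (by linarith)
          linarith
  -- conclusion
  have hratio : D0 * p / (D0 * p + D1 * (1 - q)) = D1 * q / (D0 * (1 - p) + D1 * q) := by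
    have hfrac : D0 * p / (D0 * p + D1 * (1 - q)) = 1 - x0 := by
      rw [hx0v]
      field_simp
      ring
    calc D0 * p / (D0 * p + D1 * (1 - q)) = 1 - x0 := hfrac
      _ = x1 := by linarith
      _ = D1 * q / (D0 * (1 - p) + D1 * q) := hx1v
  refine ⟨⟨hp0, hp1⟩, ⟨hq0, hq1⟩, hratio, ?_⟩
  have h2 := hratio
  rw [div_eq_div_iff hW0.ne' hW1.ne'] at h2
  linear_combination h2
end

section
/- Consider the scoring-rule coupon game with the quadratic scoring rule f0(x) = 2 − 2x², f1(x) = 4x − 2x² (derived from g(x) = 2 − 2x + 2x²), with D0, D1 > 0, D0 + D1 = 1 and ρ > 0. Then every Bayesian Nash equilibrium (p, q, x0, x1) with p, q ∈ (0,1) satisfies x0 = (2−ρ)/4 and x1 = (2+ρ)/4. -/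
/-- In the scoring-rule coupon game with the quadratic scoring rule
`f0(x) = 2 − 2x²`, `f1(x) = 4x − 2x²`, every Bayesian Nash equilibrium
`(p, q, x0, x1)` with `p, q ∈ (0,1)` satisfies `x0 = (2−ρ)/4` and
`x1 = (2+ρ)/4`. -/
theorem quadratic_scoring_rule_BNE (D0 D1 ρ : ℝ)
    (hD0 : 0 < D0) (hD1 : 0 < D1) (hsum : D0 + D1 = 1) (hρ : 0 < ρ)
    (f0 f1 : ℝ → ℝ)
    (hf0 : ∀ x, f0 x = 2 - 2 * x ^ 2)
    (hf1 : ∀ x, f1 x = 4 * x - 2 * x ^ 2)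
    (p q x0 x1 : ℝ)
    (hp : p ∈ Set.Ioo (0:ℝ) 1) (hq : q ∈ Set.Ioo (0:ℝ) 1)
    (hx0 : x0 ∈ Set.Icc (0:ℝ) 1) (hx1 : x1 ∈ Set.Icc (0:ℝ) 1)
    -- (i) A's reports (x0, x1) are a best response
    (hA : ∀ x0' ∈ Set.Icc (0:ℝ) 1, ∀ x1' ∈ Set.Icc (0:ℝ) 1,
      D0 * (p * f0 x0' + (1 - p) * f0 x1') + D1 * ((1 - q) * f1 x0' + q * f1 x1')
        ≤ D0 * (p * f0 x0 + (1 - p) * f0 x1) + D1 * ((1 - q) * f1 x0 + q * f1 x1))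
    -- (ii) p is a best response for the type-0 B agent
    (hB0 : ∀ p' ∈ Set.Icc (0:ℝ) 1,
      p' * (ρ - f0 x0) - (1 - p') * f0 x1 ≤ p * (ρ - f0 x0) - (1 - p) * f0 x1)
    -- (iii) q is a best response for the type-1 B agent
    (hB1 : ∀ q' ∈ Set.Icc (0:ℝ) 1,
      q' * (ρ - f1 x1) - (1 - q') * f1 x0 ≤ q * (ρ - f1 x1) - (1 - q) * f1 x0) :
    x0 = (2 - ρ) / 4 ∧ x1 = (2 + ρ) / 4 := by
  obtain ⟨hp0, hp1⟩ := hp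
  obtain ⟨hq0, hq1⟩ := hq
  have hB00 := hB0 0 ⟨le_refl 0, zero_le_one⟩
  have hB01 := hB0 1 ⟨zero_le_one, le_refl 1⟩
  have hB10 := hB1 0 ⟨le_refl 0, zero_le_one⟩
  have hB11 := hB1 1 ⟨zero_le_one, le_refl 1⟩
  have c0 : ρ - f0 x0 + f0 x1 = 0 := by nlinarith [mul_pos hp0 (sub_pos.mpr hp1)]
  have c1 : ρ - f1 x1 + f1 x0 = 0 := by nlinarith [mul_pos hq0 (sub_pos.mpr hq1)]
  rw [hf0 x0, hf0 x1] at c0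
  rw [hf1 x0, hf1 x1] at c1
  constructor <;> nlinarith [sq_nonneg (x0 + x1 - 1), sq_nonneg (x0 - x1)]
end

section
/- In the identity-payment coupon game with ρ0 ≠ ρ1, every Bayesian Nash equilibrium (p, q, x, y) has at least one of p, q in {0, 1}; that is, at least one of the two types of B agent plays a pure strategy. -/
/-- Bayesian Nash equilibrium of the identity-payment coupon game with priors
`D0, D1`, coupon values `ρ0, ρ1`, a strategy `(p, q)` for the two types of B and
a strategy `(x, y)` for A. -/
def IdBNE (D0 D1 ρ0 ρ1 p q x y : ℝ) : Prop :=
  p ∈ Set.Icc (0:ℝ) 1 ∧ q ∈ Set.Icc (0:ℝ) 1 ∧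
  x ∈ Set.Icc (0:ℝ) 1 ∧ y ∈ Set.Icc (0:ℝ) 1 ∧
  (∀ x' ∈ Set.Icc (0:ℝ) 1, ∀ y' ∈ Set.Icc (0:ℝ) 1,
    D0 * (p * x' + (1 - p) * (1 - y')) + D1 * (q * y' + (1 - q) * (1 - x'))
      ≤ D0 * (p * x + (1 - p) * (1 - y)) + D1 * (q * y + (1 - q) * (1 - x))) ∧
  (∀ p' ∈ Set.Icc (0:ℝ) 1,
    p' * (ρ0 - x) + (1 - p') * (y - 1) ≤ p * (ρ0 - x) + (1 - p) * (y - 1)) ∧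
  (∀ q' ∈ Set.Icc (0:ℝ) 1,
    q' * (ρ1 - y) + (1 - q') * (x - 1) ≤ q * (ρ1 - y) + (1 - q) * (x - 1))

/-- In the identity-payment coupon game with `ρ0 ≠ ρ1`, in every Bayesian Nash
equilibrium at least one of the two types of B agent plays a pure strategy. -/
theorem identity_payment_BNE_pure_type (D0 D1 ρ0 ρ1 p q x y : ℝ)
    (hD1 : 0 < D1) (hD : D1 ≤ D0) (hsum : D0 + D1 = 1)
    (hρ0 : 0 < ρ0) (hρ1 : 0 < ρ1) (hρ : ρ0 ≠ ρ1)
    (hBNE : IdBNE D0 D1 ρ0 ρ1 p q x y) :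
    p = 0 ∨ p = 1 ∨ q = 0 ∨ q = 1 := by
  obtain ⟨hp, hq, hx, hy, _, hP, hQ⟩ := hBNE
  by_contra h
  push_neg at h
  obtain ⟨hp0, hp1, hq0, hq1⟩ := h
  have hp' : 0 < p ∧ p < 1 := ⟨lt_of_le_of_ne hp.1 (Ne.symm hp0), lt_of_le_of_ne hp.2 hp1⟩
  have hq' : 0 < q ∧ q < 1 := ⟨lt_of_le_of_ne hq.1 (Ne.symm hq0), lt_of_le_of_ne hq.2 hq1⟩
  have h0 := hP 0 ⟨le_refl 0, zero_le_one⟩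
  have h1 := hP 1 ⟨zero_le_one, le_refl 1⟩
  have e1 : ρ0 - x = y - 1 := by
    rcases lt_trichotomy (ρ0 - x) (y - 1) with hlt | heq | hgt
    · nlinarith [hp'.1, hp'.2]
    · exact heq
    · nlinarith [hp'.1, hp'.2]
  have h0' := hQ 0 ⟨le_refl 0, zero_le_one⟩
  have h1' := hQ 1 ⟨zero_le_one, le_refl 1⟩
  have e2 : ρ1 - y = x - 1 := by
    rcases lt_trichotomy (ρ1 - y) (x - 1) with hlt | heq | hgt
    · nlinarith [hq'.1, hq'.2]
    · exact heq
    · nlinarith [hq'.1, hq'.2]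
  exact hρ (by linarith)
end

section
/- In the identity-payment coupon game with D0 > D1 and equal coupon values ρ0 = ρ1 = ρ ∈ (0,1), the strategy profile (p, q, x, y) = (D0, D0, 1, ρ) is a Bayesian Nash equilibrium. In particular, both types of B send the truthful signal with the same probability D0 ∈ (1/2, 1), i.e., B plays a Randomized Response strategy preserving ln(D0/D1)-differential privacy. -/
/-- In the identity-payment coupon game with `D0 > D1` and equal coupon values
`ρ0 = ρ1 = ρ ∈ (0,1)`, the profile `(p, q, x, y) = (D0, D0, 1, ρ)` is a Bayesian
Nash equilibrium; in particular both types of B send the truthful signal with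
the same probability `D0 ∈ (1/2, 1)` (Randomized Response with
`ε = ln(D0/D1)`). -/
theorem identity_payment_randomized_response_BNE (D0 D1 ρ : ℝ)
    (hD1 : 0 < D1) (hD : D1 < D0) (hsum : D0 + D1 = 1)
    (hρ : ρ ∈ Set.Ioo (0:ℝ) 1) :
    IdBNE D0 D1 ρ ρ D0 D0 1 ρ ∧ 1/2 < D0 ∧ D0 < 1 := by
  obtain ⟨hρ0, hρ1⟩ := hρ
  refine ⟨⟨⟨by linarith, by linarith⟩, ⟨by linarith, by linarith⟩,
    ⟨by norm_num, by norm_num⟩, ⟨by linarith, by linarith⟩, ?_, ?_, ?_⟩,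
    by linarith, by linarith⟩
  · rintro x' ⟨hx0, hx1⟩ y' ⟨hy0, hy1⟩
    have e : (1:ℝ) - D0 = D1 := by linarith
    rw [e]
    nlinarith [mul_nonneg (mul_nonneg (by linarith : (0:ℝ) ≤ D0+D1) (by linarith : (0:ℝ) ≤ D0-D1)) (by linarith : (0:ℝ) ≤ 1-x')]
  · rintro p' ⟨hp0, hp1⟩; nlinarith
  · rintro q' ⟨hq0, hq1⟩; nlinarith
end

section
/- In the identity-payment coupon game with random coupon valuations, every Bayesian Nash equilibrium ((σ0, σ1), (x, y)) satisfies: x = 1; if μ((−∞,1)) ≥ D1 then μ((−∞,y)) = D1, while if μ((−∞,1)) < D1 then y = 1; and for each type t ∈ {0,1} and every valuation ρ > 0, if ρ > y then σ_t(ρ) = 1 and if ρ < y then σ_t(ρ) = 0. That is, B follows a threshold strategy with threshold y: agents valuing the coupon above y report truthfully and agents valuing it below y lie. -/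
set_option maxHeartbeats 1000000


open MeasureTheory

private lemma aux_br_one (a b s : ℝ) (hs : s ∈ Set.Icc (0:ℝ) 1)
    (h : ∀ p' ∈ Set.Icc (0:ℝ) 1, p' * a + (1 - p') * b ≤ s * a + (1 - s) * b)
    (hab : b < a) : s = 1 := by
  have h1 := h 1 ⟨zero_le_one, le_refl 1⟩
  have hs1 : 1 ≤ s := by nlinarith
  exact le_antisymm hs.2 hs1

private lemma aux_br_zero (a b s : ℝ) (hs : s ∈ Set.Icc (0:ℝ) 1)
    (h : ∀ p' ∈ Set.Icc (0:ℝ) 1, p' * a + (1 - p') * b ≤ s * a + (1 - s) * b)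
    (hab : a < b) : s = 0 := by
  have h0 := h 0 ⟨le_refl 0, zero_le_one⟩
  have hs0 : s ≤ 0 := by nlinarith
  exact le_antisymm hs0 hs.1

private lemma aux_integral (μ : Measure ℝ) [IsProbabilityMeasure μ] [NullSingletonClass μ]
    (hμ : μ (Set.Iic (0:ℝ)) = 0) (σ : ℝ → ℝ)
    (T : ℝ)
    (hth : ∀ ρ : ℝ, 0 < ρ → (T < ρ → σ ρ = 1) ∧ (ρ < T → σ ρ = 0)) :
    (∫ ρ, σ ρ ∂μ) = (μ (Set.Ioi T)).toReal ∧
    (∫ ρ, (1 - σ ρ) ∂μ) = (μ (Set.Iio T)).toReal := by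
  have hnull : μ (Set.Iic 0 ∪ {T}) = 0 :=
    measure_union_null hμ (measure_singleton T)
  have hae : ∀ᵐ ρ ∂μ, ρ ∉ (Set.Iic (0:ℝ) ∪ {T}) := by
    rw [ae_iff]
    apply measure_mono_null _ hnull
    intro a ha
    exact not_not.mp ha
  constructor
  · have h1 : σ =ᵐ[μ] (Set.Ioi T).indicator (fun _ => (1:ℝ)) := by
      filter_upwards [hae] with ρ hρ
      simp only [Set.mem_union, Set.mem_Iic, Set.mem_singleton_iff, not_or, not_le] at hρ
      obtain ⟨h0, hT⟩ := hρ
      rcases lt_or_gt_of_ne hT with hlt | hgt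
      · rw [(hth ρ h0).2 hlt, Set.indicator_of_notMem (by simp [Set.mem_Ioi]; linarith)]
      · rw [(hth ρ h0).1 hgt, Set.indicator_of_mem (by simpa [Set.mem_Ioi] using hgt)]
    rw [integral_congr_ae h1]
    exact integral_indicator_one measurableSet_Ioi
  · have h2 : (fun ρ => 1 - σ ρ) =ᵐ[μ] (Set.Iio T).indicator (fun _ => (1:ℝ)) := by
      filter_upwards [hae] with ρ hρ
      simp only [Set.mem_union, Set.mem_Iic, Set.mem_singleton_iff, not_or, not_le] at hρ
      obtain ⟨h0, hT⟩ := hρ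
      rcases lt_or_gt_of_ne hT with hlt | hgt
      · rw [(hth ρ h0).2 hlt, Set.indicator_of_mem (by simpa [Set.mem_Iio] using hlt)]
        norm_num
      · rw [(hth ρ h0).1 hgt, Set.indicator_of_notMem (by simp [Set.mem_Iio]; linarith)]
        norm_num
    rw [integral_congr_ae h2]
    exact integral_indicator_one measurableSet_Iio

private lemma aux_compl (μ : Measure ℝ) [IsProbabilityMeasure μ] [NullSingletonClass μ] (T : ℝ) :
    (μ (Set.Ioi T)).toReal = 1 - (μ (Set.Iio T)).toReal := by
  have h := measure_add_measure_compl (μ := μ) (measurableSet_Iio (a := T))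
  rw [Set.compl_Iio, measure_univ] at h
  have h2 : μ (Set.Ici T) = μ (Set.Ioi T) := (measure_congr (Ioi_ae_eq_Ici (a := T))).symm
  rw [h2] at h
  have h3 := congrArg ENNReal.toReal h
  rw [ENNReal.toReal_add (measure_ne_top _ _) (measure_ne_top _ _)] at h3
  simp at h3
  linarith

private lemma aux_le_one (μ : Measure ℝ) [IsProbabilityMeasure μ] (s : Set ℝ) :
    (μ s).toReal ≤ 1 := by
  have h : μ s ≤ 1 := prob_le_one
  calc (μ s).toReal ≤ (1:ENNReal).toReal := ENNReal.toReal_mono (by simp) h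
    _ = 1 := by simp

private lemma aux_mono (μ : Measure ℝ) [IsProbabilityMeasure μ] {s t : Set ℝ}
    (hst : s ⊆ t) : (μ s).toReal ≤ (μ t).toReal :=
  ENNReal.toReal_mono (measure_ne_top _ _) (measure_mono hst)

/-- In the identity-payment coupon game with random coupon valuations, every
Bayesian Nash equilibrium `((σ0, σ1), (x, y))` satisfies: `x = 1`; if
`μ((−∞,1)) ≥ D1` then `μ((−∞,y)) = D1` and otherwise `y = 1` (where
`μ = D0·μ0 + D1·μ1`); and B plays a threshold strategy with threshold `y`:
agents with valuation above `y` report truthfully, agents below `y` lie. -/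
theorem identity_payment_continuous_valuations_BNE
    (D0 D1 : ℝ) (hD1 : 0 < D1) (hD : D1 < D0) (hsum : D0 + D1 = 1)
    (μ0 μ1 : Measure ℝ) [IsProbabilityMeasure μ0] [IsProbabilityMeasure μ1]
    [NullSingletonClass μ0] [NullSingletonClass μ1]
    (hμ0 : μ0 (Set.Iic (0:ℝ)) = 0) (hμ1 : μ1 (Set.Iic (0:ℝ)) = 0)
    (σ0 σ1 : ℝ → ℝ) (hσ0m : Measurable σ0) (hσ1m : Measurable σ1)
    (hσ0r : ∀ ρ : ℝ, σ0 ρ ∈ Set.Icc (0:ℝ) 1)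
    (hσ1r : ∀ ρ : ℝ, σ1 ρ ∈ Set.Icc (0:ℝ) 1)
    (x y : ℝ) (hx : x ∈ Set.Icc (0:ℝ) 1) (hy : y ∈ Set.Icc (0:ℝ) 1)
    -- (i) each B agent's report is a best response
    (hB : ∀ ρ : ℝ, 0 < ρ →
      (∀ p' ∈ Set.Icc (0:ℝ) 1,
        p' * (ρ - x) + (1 - p') * (y - 1) ≤ σ0 ρ * (ρ - x) + (1 - σ0 ρ) * (y - 1)) ∧
      (∀ q' ∈ Set.Icc (0:ℝ) 1,
        q' * (ρ - y) + (1 - q') * (x - 1) ≤ σ1 ρ * (ρ - y) + (1 - σ1 ρ) * (x - 1)))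
    -- (ii) A's guesses (x, y) are a best response
    (hA : ∀ x' ∈ Set.Icc (0:ℝ) 1, ∀ y' ∈ Set.Icc (0:ℝ) 1,
      x' * D0 * (∫ ρ, σ0 ρ ∂μ0) + (1 - x') * D1 * (∫ ρ, (1 - σ1 ρ) ∂μ1)
          + y' * D1 * (∫ ρ, σ1 ρ ∂μ1) + (1 - y') * D0 * (∫ ρ, (1 - σ0 ρ) ∂μ0)
        ≤ x * D0 * (∫ ρ, σ0 ρ ∂μ0) + (1 - x) * D1 * (∫ ρ, (1 - σ1 ρ) ∂μ1)
          + y * D1 * (∫ ρ, σ1 ρ ∂μ1) + (1 - y) * D0 * (∫ ρ, (1 - σ0 ρ) ∂μ0)) :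
    x = 1 ∧
    (D1 ≤ D0 * (μ0 (Set.Iio 1)).toReal + D1 * (μ1 (Set.Iio 1)).toReal →
      D0 * (μ0 (Set.Iio y)).toReal + D1 * (μ1 (Set.Iio y)).toReal = D1) ∧
    (D0 * (μ0 (Set.Iio 1)).toReal + D1 * (μ1 (Set.Iio 1)).toReal < D1 → y = 1) ∧
    (∀ ρ : ℝ, 0 < ρ →
      (y < ρ → σ0 ρ = 1 ∧ σ1 ρ = 1) ∧ (ρ < y → σ0 ρ = 0 ∧ σ1 ρ = 0)) := by
  obtain ⟨hx0, hx1⟩ := hx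
  obtain ⟨hy0, hy1⟩ := hy
  -- thresholds
  have hth0 : ∀ ρ : ℝ, 0 < ρ → (x + y - 1 < ρ → σ0 ρ = 1) ∧ (ρ < x + y - 1 → σ0 ρ = 0) := by
    intro ρ hρ
    refine ⟨fun hlt => aux_br_one _ _ _ (hσ0r ρ) (hB ρ hρ).1 (by linarith),
      fun hlt => aux_br_zero _ _ _ (hσ0r ρ) (hB ρ hρ).1 (by linarith)⟩
  have hth1 : ∀ ρ : ℝ, 0 < ρ → (x + y - 1 < ρ → σ1 ρ = 1) ∧ (ρ < x + y - 1 → σ1 ρ = 0) := by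
    intro ρ hρ
    refine ⟨fun hlt => aux_br_one _ _ _ (hσ1r ρ) (hB ρ hρ).2 (by linarith),
      fun hlt => aux_br_zero _ _ _ (hσ1r ρ) (hB ρ hρ).2 (by linarith)⟩
  set T : ℝ := x + y - 1 with hT
  obtain ⟨hI0, hJ0⟩ := aux_integral μ0 hμ0 σ0 T hth0
  obtain ⟨hI1, hJ1⟩ := aux_integral μ1 hμ1 σ1 T hth1
  have hcompl0 := aux_compl μ0 T
  have hcompl1 := aux_compl μ1 T
  set G0 : ℝ := (μ0 (Set.Iio T)).toReal with hG0
  set G1 : ℝ := (μ1 (Set.Iio T)).toReal with hG1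
  have hG00 : 0 ≤ G0 := ENNReal.toReal_nonneg
  have hG10 : 0 ≤ G1 := ENNReal.toReal_nonneg
  have hG01 : G0 ≤ 1 := aux_le_one μ0 _
  have hG11 : G1 ≤ 1 := aux_le_one μ1 _
  -- rewrite the integrals
  rw [hcompl0] at hI0
  rw [hcompl1] at hI1
  -- A's optimality inequalities
  have hAx := hA 1 ⟨zero_le_one, le_refl 1⟩ y ⟨hy0, hy1⟩
  have hAy0 := hA x ⟨hx0, hx1⟩ 0 ⟨le_refl 0, zero_le_one⟩
  have hAy1 := hA x ⟨hx0, hx1⟩ 1 ⟨zero_le_one, le_refl 1⟩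
  rw [hI0, hI1, hJ0, hJ1] at hAx hAy0 hAy1
  have hCx : (1 - x) * (D0 * (1 - G0) - D1 * G1) ≤ 0 := by nlinarith [hAx]
  have hCyge : 0 ≤ y * (D1 * (1 - G1) - D0 * G0) := by nlinarith [hAy0]
  have hCyle : (1 - y) * (D1 * (1 - G1) - D0 * G0) ≤ 0 := by nlinarith [hAy1]
  -- step 1: x = 1
  have hxeq : x = 1 := by
    by_contra hne
    have hxlt : x < 1 := lt_of_le_of_ne hx1 hne
    rcases le_or_gt T 0 with hTle | hTgt
    · -- then G0 = G1 = 0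
      have h0 : μ0 (Set.Iio T) = 0 :=
        measure_mono_null (fun a ha => le_trans (le_of_lt ha) hTle) hμ0
      have h1 : μ1 (Set.Iio T) = 0 :=
        measure_mono_null (fun a ha => le_trans (le_of_lt ha) hTle) hμ1
      have hG0z : G0 = 0 := by rw [hG0, h0]; simp
      have hG1z : G1 = 0 := by rw [hG1, h1]; simp
      rw [hG0z, hG1z] at hCx
      nlinarith
    · -- T > 0 : from hCx, D0 ≤ D0*G0 + D1*G1; then Cy < 0 forces y = 0, so T < 0
      have hD0le : D0 ≤ D0 * G0 + D1 * G1 := by nlinarith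
      have hCyneg : D1 * (1 - G1) - D0 * G0 < 0 := by nlinarith
      have hyz : y = 0 := by nlinarith
      rw [hT] at hTgt
      linarith
  subst hxeq
  have hTy : T = y := by rw [hT]; ring
  rw [hTy] at hG0 hG1 hth0 hth1
  -- threshold conclusion
  have hthm : ∀ ρ : ℝ, 0 < ρ →
      (y < ρ → σ0 ρ = 1 ∧ σ1 ρ = 1) ∧ (ρ < y → σ0 ρ = 0 ∧ σ1 ρ = 0) := by
    intro ρ hρ
    have h1y : 1 + y - 1 = y := by ring
    constructor
    · intro hlt
      exact ⟨(hth0 ρ hρ).1 (by linarith), (hth1 ρ hρ).1 (by linarith)⟩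
    · intro hlt
      exact ⟨(hth0 ρ hρ).2 (by linarith), (hth1 ρ hρ).2 (by linarith)⟩
  -- y > 0
  have hypos : 0 < y := by
    rcases lt_or_eq_of_le hy0 with h | h
    · exact h
    · exfalso
      have h0 : μ0 (Set.Iio y) = 0 :=
        measure_mono_null (fun a ha => le_trans (le_of_lt ha) (le_of_eq h.symm)) hμ0
      have h1 : μ1 (Set.Iio y) = 0 :=
        measure_mono_null (fun a ha => le_trans (le_of_lt ha) (le_of_eq h.symm)) hμ1
      have hG0z : G0 = 0 := by rw [hG0, h0]; simp
      have hG1z : G1 = 0 := by rw [hG1, h1]; simp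
      rw [hG0z, hG1z] at hCyle
      nlinarith
  -- from hCyge with y > 0 : D0*G0 + D1*G1 ≤ D1
  have hGleD1 : D0 * G0 + D1 * G1 ≤ D1 := by nlinarith
  have hGyle1 : D0 * (μ0 (Set.Iio y)).toReal + D1 * (μ1 (Set.Iio y)).toReal
      ≤ D0 * (μ0 (Set.Iio 1)).toReal + D1 * (μ1 (Set.Iio 1)).toReal := by
    have m0 := aux_mono μ0 (Set.Iio_subset_Iio hy1)
    have m1 := aux_mono μ1 (Set.Iio_subset_Iio hy1)
    nlinarith
  refine ⟨rfl, ?_, ?_, hthm⟩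
  · intro hle
    rcases lt_or_eq_of_le hy1 with hylt | hyeq
    · -- y < 1 : from hCyle, D1 ≤ D0*G0 + D1*G1
      have : D1 ≤ D0 * G0 + D1 * G1 := by nlinarith
      rw [hG0, hG1] at hGleD1 this
      linarith
    · rw [hyeq]
      rw [hG0, hG1, hyeq] at hGleD1
      linarith
  · intro hlt
    rcases lt_or_eq_of_le hy1 with hylt | hyeq
    · exfalso
      have hge : D1 ≤ D0 * G0 + D1 * G1 := by nlinarith
      rw [hG0, hG1] at hge
      linarith
    · exact hyeq
end

section
/- In the opt-out coupon game, assume D0²·M00·M10 = D1²·M01·M11, and that 0 < ρ1·M10 − ρ0·M11 < M01·M10 − M00·M11 and 0 < ρ0·M01 − ρ1·M00 < M01·M10 − M00·M11. Then in every Bayesian Nash equilibrium, B's strategy is p = q = (D0·D1·M01·M10 − D1²·M01·M11)/(D0·D1·(M01·M10 − M00·M11)) with 1/2 ≤ p < 1; that is, B's unique BNE strategy is a nondegenerate Randomized Response strategy. -/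
/-- Bayesian Nash equilibrium of the opt-out coupon game: `(p, q)` is B's
strategy, `(x0, x1)` (resp. `(y0, y1)`) are A's accusation probabilities after
signal 0 (resp. signal 1), the remaining probability being opting out. -/
def OptOutBNE (D0 D1 M00 M01 M10 M11 ρ0 ρ1 p q x0 x1 y0 y1 : ℝ) : Prop :=
  p ∈ Set.Icc (0:ℝ) 1 ∧ q ∈ Set.Icc (0:ℝ) 1 ∧
  x0 ∈ Set.Icc (0:ℝ) 1 ∧ x1 ∈ Set.Icc (0:ℝ) 1 ∧
  y0 ∈ Set.Icc (0:ℝ) 1 ∧ y1 ∈ Set.Icc (0:ℝ) 1 ∧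
  x0 + x1 ≤ 1 ∧ y0 + y1 ≤ 1 ∧
  -- (i) A's accusation probabilities are a best response
  (∀ x0' x1' y0' y1' : ℝ, x0' ∈ Set.Icc (0:ℝ) 1 → x1' ∈ Set.Icc (0:ℝ) 1 →
    y0' ∈ Set.Icc (0:ℝ) 1 → y1' ∈ Set.Icc (0:ℝ) 1 →
    x0' + x1' ≤ 1 → y0' + y1' ≤ 1 →
    x0' * (D0 * p * M00 - D1 * (1 - q) * M01)
        + x1' * (-(D0 * p * M10) + D1 * (1 - q) * M11)
        + y0' * (D0 * (1 - p) * M00 - D1 * q * M01)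
        + y1' * (-(D0 * (1 - p) * M10) + D1 * q * M11)
      ≤ x0 * (D0 * p * M00 - D1 * (1 - q) * M01)
        + x1 * (-(D0 * p * M10) + D1 * (1 - q) * M11)
        + y0 * (D0 * (1 - p) * M00 - D1 * q * M01)
        + y1 * (-(D0 * (1 - p) * M10) + D1 * q * M11)) ∧
  -- (ii) p is a best response for the type-0 B agent
  (∀ p' ∈ Set.Icc (0:ℝ) 1,
    p' * (ρ0 - x0 * M00 + x1 * M10) + (1 - p') * (-(y0 * M00) + y1 * M10)
      ≤ p * (ρ0 - x0 * M00 + x1 * M10) + (1 - p) * (-(y0 * M00) + y1 * M10)) ∧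
  -- (iii) q is a best response for the type-1 B agent
  (∀ q' ∈ Set.Icc (0:ℝ) 1,
    q' * (ρ1 - y1 * M11 + y0 * M01) + (1 - q') * (-(x1 * M11) + x0 * M01)
      ≤ q * (ρ1 - y1 * M11 + y0 * M01) + (1 - q) * (-(x1 * M11) + x0 * M01))


private lemma aux_nonpos {x A : ℝ} (h : 0 ≤ x * A) (hA : A < 0) : x ≤ 0 := by nlinarith

private lemma aux_nonpos' {x A : ℝ} (h : x * A ≤ 0) (hx : 0 < x) : A ≤ 0 := by nlinarith

private lemma aux_nonneg {x A : ℝ} (h : 0 ≤ x * A) (hx : 0 < x) : 0 ≤ A := by nlinarith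

private lemma aux_one_le {x A : ℝ} (h : A ≤ x * A) (hA : 0 < A) : 1 ≤ x := by nlinarith

private lemma aux_posdiv {u d c : ℝ} (h : u * d = c) (hc : 0 < c) (hd : 0 < d) : 0 < u := by
  nlinarith

private lemma aux_ltdiv {u d c : ℝ} (h : u * d = c) (hc : c < d) (hd : 0 < d) : u < 1 := by
  nlinarith

private lemma aux_mulcontra {a b m00 m01 m10 m11 : ℝ} (ha : 0 < a) (hb : 0 < b)
    (h1 : b * m01 ≤ a * m00) (h2 : a * m10 ≤ b * m11)
    (h00 : 0 < m00) (h10 : 0 < m10) (hm : m00 * m11 < m01 * m10) : False := by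
  have key : (b * m01) * (a * m10) ≤ (a * m00) * (b * m11) :=
    mul_le_mul h1 h2 (by positivity) (by positivity)
  nlinarith [key, mul_pos (mul_pos ha hb) (show (0:ℝ) < m01 * m10 - m00 * m11 by linarith)]

private lemma aux_corner11 {ρ0 ρ1 M00 M01 M10 M11 : ℝ}
    (h00 : 0 < M00) (h01 : 0 < M01) (h10 : 0 < M10) (h11 : 0 < M11)
    (ha : M00 + M10 ≤ ρ0) (hb : M01 + M11 ≤ ρ1)
    (hc1' : ρ1 * M10 - ρ0 * M11 < M01 * M10 - M00 * M11)
    (hc2' : ρ0 * M01 - ρ1 * M00 < M01 * M10 - M00 * M11)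
    (hΔ : 0 < M01 * M10 - M00 * M11) : False := by
  have ha' : 0 ≤ ρ0 - M00 - M10 := by linarith
  have hb' : 0 ≤ ρ1 - M01 - M11 := by linarith
  have h1 : (ρ0 - M00 - M10) * M01 < (ρ1 - M01 - M11) * M00 := by nlinarith [hc2']
  have h2 : (ρ1 - M01 - M11) * M10 < (ρ0 - M00 - M10) * M11 := by nlinarith [hc1']
  have h3 := mul_lt_mul'' h1 h2 (mul_nonneg ha' h01.le) (mul_nonneg hb' h10.le)
  nlinarith [h3, mul_nonneg ha' hb', hΔ]

private lemma aux_p0q1 {ρ0 ρ1 M00 M01 M10 M11 x0 x1 : ℝ}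
    (h00 : 0 < M00) (h01 : 0 < M01) (hx1 : 0 ≤ x1)
    (hS0 : ρ0 - x0 * M00 + x1 * M10 ≤ 0) (hS1 : 0 ≤ ρ1 + x1 * M11 - x0 * M01)
    (hc2 : 0 < ρ0 * M01 - ρ1 * M00) (hΔ : 0 < M01 * M10 - M00 * M11) : False := by
  nlinarith [hS0, hS1, h00, h01, hc2, mul_nonneg hx1 hΔ.le]

private lemma aux_p1q0 {ρ0 ρ1 M00 M01 M10 M11 y0 y1 : ℝ}
    (h10 : 0 < M10) (h11 : 0 < M11) (hy0 : 0 ≤ y0)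
    (hS1 : ρ1 - y1 * M11 + y0 * M01 ≤ 0) (hS0 : 0 ≤ ρ0 + y0 * M00 - y1 * M10)
    (hc1 : 0 < ρ1 * M10 - ρ0 * M11) (hΔ : 0 < M01 * M10 - M00 * M11) : False := by
  nlinarith [hS1, hS0, h10, h11, hc1, mul_nonneg hy0 hΔ.le]

private lemma aux_p1int {ρ0 ρ1 M00 M01 M10 M11 x0 : ℝ}
    (h00 : 0 < M00) (h01 : 0 < M01)
    (hS1 : ρ1 - M11 - x0 * M01 = 0) (hS0 : 0 ≤ ρ0 - x0 * M00 - M10)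
    (hc2' : ρ0 * M01 - ρ1 * M00 < M01 * M10 - M00 * M11) : False := by
  nlinarith [mul_nonneg hS0 h01.le, hS1, h00, hc2']

private lemma aux_q1int {ρ0 ρ1 M00 M01 M10 M11 y1 : ℝ}
    (h10 : 0 < M10) (h11 : 0 < M11)
    (hS0 : ρ0 - M00 - y1 * M10 = 0) (hS1 : 0 ≤ ρ1 - y1 * M11 - M01)
    (hc1' : ρ1 * M10 - ρ0 * M11 < M01 * M10 - M00 * M11) : False := by
  nlinarith [mul_nonneg hS1 h10.le, hS0, h11, hc1']

private lemma aux_half {D0 D1 M00 M01 M10 M11 p : ℝ}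
    (hD0 : 0 < D0) (hD1 : 0 < D1)
    (h00 : 0 < M00) (h01 : 0 < M01) (h10 : 0 < M10) (h11 : 0 < M11)
    (hΔ : 0 < M01 * M10 - M00 * M11)
    (hbal : D0 ^ 2 * M00 * M10 = D1 ^ 2 * M01 * M11)
    (hp_eq : D0 * p * (M01 * M10 - M00 * M11) = D0 * M01 * M10 - D1 * M01 * M11) :
    1/2 ≤ p := by
  have hXY : (D0 * M01 * M10) * (D0 * M00 * M11) = (D1 * M01 * M11) ^ 2 := by
    linear_combination M01 * M11 * hbal
  have h2 : (2 * (D1 * M01 * M11)) ^ 2 ≤ (D0 * M01 * M10 + D0 * M00 * M11) ^ 2 := by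
    nlinarith [sq_nonneg (D0 * M01 * M10 - D0 * M00 * M11), hXY]
  have hpos : (0:ℝ) ≤ D0 * M01 * M10 + D0 * M00 * M11 := by positivity
  have h3 : 2 * (D1 * M01 * M11) ≤ D0 * M01 * M10 + D0 * M00 * M11 :=
    le_of_pow_le_pow_left₀ two_ne_zero hpos h2
  nlinarith [hp_eq, h3, mul_pos hD0 hΔ]

private lemma aux_lt1 {D0 D1 M00 M01 M10 M11 p : ℝ}
    (hD0 : 0 < D0) (h11 : 0 < M11)
    (hΔ : 0 < M01 * M10 - M00 * M11)
    (hopt0 : D0 * M00 < D1 * M01)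
    (hp_eq : D0 * p * (M01 * M10 - M00 * M11) = D0 * M01 * M10 - D1 * M01 * M11) :
    p < 1 := by
  nlinarith [hp_eq, mul_pos hD0 hΔ, mul_lt_mul_of_pos_right hopt0 h11]

set_option maxHeartbeats 1000000 in
/-- In the opt-out coupon game with `D0²·M00·M10 = D1²·M01·M11` and the
feasibility condition of the interior equilibrium holding strictly, in every
Bayesian Nash equilibrium B's unique strategy is a nondegenerate Randomized
Response strategy. -/
theorem optout_BNE_randomized_response
    (D0 D1 M00 M01 M10 M11 ρ0 ρ1 : ℝ)
    (hD1 : 0 < D1) (hD : D1 ≤ D0) (hsum : D0 + D1 = 1)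
    (h00 : 0 < M00) (h01 : 0 < M01) (h10 : 0 < M10) (h11 : 0 < M11)
    (hopt0 : D0 * M00 < D1 * M01) (hopt1 : D1 * M11 < D0 * M10)
    (hρ0 : 0 < ρ0) (hρ1 : 0 < ρ1)
    (hbal : D0 ^ 2 * M00 * M10 = D1 ^ 2 * M01 * M11)
    (hc1 : 0 < ρ1 * M10 - ρ0 * M11)
    (hc1' : ρ1 * M10 - ρ0 * M11 < M01 * M10 - M00 * M11)
    (hc2 : 0 < ρ0 * M01 - ρ1 * M00)
    (hc2' : ρ0 * M01 - ρ1 * M00 < M01 * M10 - M00 * M11) :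
    ∀ p q x0 x1 y0 y1 : ℝ,
      OptOutBNE D0 D1 M00 M01 M10 M11 ρ0 ρ1 p q x0 x1 y0 y1 →
      p = (D0 * D1 * M01 * M10 - D1 ^ 2 * M01 * M11) /
            (D0 * D1 * (M01 * M10 - M00 * M11)) ∧
      q = p ∧ 1/2 ≤ p ∧ p < 1 := by
  intro p q x0 x1 y0 y1 hbne
  obtain ⟨hpI, hqI, hx0I, hx1I, hy0I, hy1I, hxs, hys, hA, hBp, hBq⟩ := hbne
  obtain ⟨hp0, hp1⟩ := Set.mem_Icc.mp hpI
  obtain ⟨hq0, hq1⟩ := Set.mem_Icc.mp hqI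
  obtain ⟨hx00, hx01⟩ := Set.mem_Icc.mp hx0I
  obtain ⟨hx10, hx11⟩ := Set.mem_Icc.mp hx1I
  obtain ⟨hy00, hy01⟩ := Set.mem_Icc.mp hy0I
  obtain ⟨hy10, hy11⟩ := Set.mem_Icc.mp hy1I
  have hD0 : (0:ℝ) < D0 := lt_of_lt_of_le hD1 hD
  have hΔ : (0:ℝ) < M01 * M10 - M00 * M11 := by
    nlinarith [mul_pos hD0 hD1,
      mul_lt_mul'' hopt0 hopt1 (by positivity) (by positivity)]
  set A0 := D0 * p * M00 - D1 * (1 - q) * M01 with hA0d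
  set A1 := -(D0 * p * M10) + D1 * (1 - q) * M11 with hA1d
  set B0 := D0 * (1 - p) * M00 - D1 * q * M01 with hB0d
  set B1 := -(D0 * (1 - p) * M10) + D1 * q * M11 with hB1d
  have hX : ∀ a b : ℝ, 0 ≤ a → a ≤ 1 → 0 ≤ b → b ≤ 1 → a + b ≤ 1 →
      a * A0 + b * A1 ≤ x0 * A0 + x1 * A1 := by
    intro a b h1 h2 h3 h4 h5
    have := hA a b y0 y1 (Set.mem_Icc.mpr ⟨h1, h2⟩) (Set.mem_Icc.mpr ⟨h3, h4⟩)
      (Set.mem_Icc.mpr ⟨hy00, hy01⟩) (Set.mem_Icc.mpr ⟨hy10, hy11⟩) h5 hys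
    linarith
  have hY : ∀ a b : ℝ, 0 ≤ a → a ≤ 1 → 0 ≤ b → b ≤ 1 → a + b ≤ 1 →
      a * B0 + b * B1 ≤ y0 * B0 + y1 * B1 := by
    intro a b h1 h2 h3 h4 h5
    have := hA x0 x1 a b (Set.mem_Icc.mpr ⟨hx00, hx01⟩) (Set.mem_Icc.mpr ⟨hx10, hx11⟩)
      (Set.mem_Icc.mpr ⟨h1, h2⟩) (Set.mem_Icc.mpr ⟨h3, h4⟩) hxs h5
    linarith
  have hx0A0 : 0 ≤ x0 * A0 := by
    have := hX 0 x1 le_rfl zero_le_one hx10 hx11 (by linarith); linarith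
  have hx1A1 : 0 ≤ x1 * A1 := by
    have := hX x0 0 hx00 hx01 le_rfl zero_le_one (by linarith); linarith
  have hy0B0 : 0 ≤ y0 * B0 := by
    have := hY 0 y1 le_rfl zero_le_one hy10 hy11 (by linarith); linarith
  have hy1B1 : 0 ≤ y1 * B1 := by
    have := hY y0 0 hy00 hy01 le_rfl zero_le_one (by linarith); linarith
  have hxm0 : A0 ≤ x0 * A0 + x1 * A1 := by
    have := hX 1 0 zero_le_one le_rfl le_rfl zero_le_one (by norm_num); linarith
  have hxm1 : A1 ≤ x0 * A0 + x1 * A1 := by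
    have := hX 0 1 le_rfl zero_le_one zero_le_one le_rfl (by norm_num); linarith
  have hym0 : B0 ≤ y0 * B0 + y1 * B1 := by
    have := hY 1 0 zero_le_one le_rfl le_rfl zero_le_one (by norm_num); linarith
  have hym1 : B1 ≤ y0 * B0 + y1 * B1 := by
    have := hY 0 1 le_rfl zero_le_one zero_le_one le_rfl (by norm_num); linarith
  set S0v := ρ0 - x0 * M00 + x1 * M10 + y0 * M00 - y1 * M10 with hS0d
  set S1v := ρ1 - y1 * M11 + y0 * M01 + x1 * M11 - x0 * M01 with hS1d
  have hS0a : 0 ≤ p * S0v := by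
    have := hBp 0 (Set.mem_Icc.mpr ⟨le_rfl, zero_le_one⟩)
    rw [hS0d]; linarith [this]
  have hS0b : (1 - p) * S0v ≤ 0 := by
    have := hBp 1 (Set.mem_Icc.mpr ⟨zero_le_one, le_rfl⟩)
    rw [hS0d]; linarith [this]
  have hS1a : 0 ≤ q * S1v := by
    have := hBq 0 (Set.mem_Icc.mpr ⟨le_rfl, zero_le_one⟩)
    rw [hS1d]; linarith [this]
  have hS1b : (1 - q) * S1v ≤ 0 := by
    have := hBq 1 (Set.mem_Icc.mpr ⟨zero_le_one, le_rfl⟩)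
    rw [hS1d]; linarith [this]
  clear hA hBp hBq hX hY hpI hqI hx0I hx1I hy0I hy1I
  -- Step A : 0 < p
  have hppos : 0 < p := by
    rcases lt_or_eq_of_le hp0 with h | h
    · exact h
    · exfalso
      have hpz : p = 0 := h.symm
      subst hpz
      rcases lt_or_eq_of_le hq1 with hq' | hq'
      · -- q < 1
        have hA0neg : A0 < 0 := by
          rw [hA0d]
          linarith [mul_pos (mul_pos hD1 (show (0:ℝ) < 1 - q by linarith)) h01]
        have hA1pos : 0 < A1 := by
          rw [hA1d]
          linarith [mul_pos (mul_pos hD1 (show (0:ℝ) < 1 - q by linarith)) h11]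
        have hx0z : x0 = 0 := le_antisymm (aux_nonpos hx0A0 hA0neg) hx00
        subst hx0z
        have hx1o : x1 = 1 :=
          le_antisymm hx11 (aux_one_le (by linarith [hxm1] : A1 ≤ x1 * A1) hA1pos)
        subst hx1o
        have hS0le : S0v ≤ 0 := by linarith [hS0b]
        rw [hS0d] at hS0le
        linarith [hS0le, mul_nonneg hy00 h00.le,
          mul_nonneg (show (0:ℝ) ≤ 1 - y1 by linarith) h10.le, hρ0]
      · -- q = 1
        have hqo : q = 1 := hq'
        subst hqo
        have hB0neg : B0 < 0 := by rw [hB0d]; linarith [hopt0]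
        have hB1neg : B1 < 0 := by rw [hB1d]; linarith [hopt1]
        have hy0z : y0 = 0 := le_antisymm (aux_nonpos hy0B0 hB0neg) hy00
        have hy1z : y1 = 0 := le_antisymm (aux_nonpos hy1B1 hB1neg) hy10
        subst hy0z; subst hy1z
        have hS0le : S0v ≤ 0 := by linarith [hS0b]
        have hS1ge : 0 ≤ S1v := by linarith [hS1a]
        rw [hS0d] at hS0le; rw [hS1d] at hS1ge
        have e1 : ρ0 - x0 * M00 + x1 * M10 ≤ 0 := by linarith [hS0le]
        have e2 : 0 ≤ ρ1 + x1 * M11 - x0 * M01 := by linarith [hS1ge]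
        exact aux_p0q1 h00 h01 hx10 e1 e2 hc2 hΔ
  -- Step B : 0 < q
  have hqpos : 0 < q := by
    rcases lt_or_eq_of_le hq0 with h | h
    · exact h
    · exfalso
      have hqz : q = 0 := h.symm
      subst hqz
      rcases lt_or_eq_of_le hp1 with hp' | hp'
      · -- p < 1
        have hB0pos : 0 < B0 := by
          rw [hB0d]
          linarith [mul_pos (mul_pos hD0 (show (0:ℝ) < 1 - p by linarith)) h00]
        have hB1neg : B1 < 0 := by
          rw [hB1d]
          linarith [mul_pos (mul_pos hD0 (show (0:ℝ) < 1 - p by linarith)) h10]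
        have hy1z : y1 = 0 := le_antisymm (aux_nonpos hy1B1 hB1neg) hy10
        subst hy1z
        have hy0o : y0 = 1 :=
          le_antisymm hy01 (aux_one_le (by linarith [hym0] : B0 ≤ y0 * B0) hB0pos)
        subst hy0o
        have hS1le : S1v ≤ 0 := by linarith [hS1b]
        rw [hS1d] at hS1le
        linarith [hS1le, mul_nonneg (show (0:ℝ) ≤ 1 - x0 by linarith) h01.le,
          mul_nonneg hx10 h11.le, hρ1]
      · -- p = 1
        have hpo : p = 1 := hp'
        subst hpo
        have hA0neg : A0 < 0 := by rw [hA0d]; linarith [hopt0]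
        have hA1neg : A1 < 0 := by rw [hA1d]; linarith [hopt1]
        have hx0z : x0 = 0 := le_antisymm (aux_nonpos hx0A0 hA0neg) hx00
        have hx1z : x1 = 0 := le_antisymm (aux_nonpos hx1A1 hA1neg) hx10
        subst hx0z; subst hx1z
        have hS1le : S1v ≤ 0 := by linarith [hS1b]
        have hS0ge : 0 ≤ S0v := by linarith [hS0a]
        rw [hS1d] at hS1le; rw [hS0d] at hS0ge
        have e1 : ρ1 - y1 * M11 + y0 * M01 ≤ 0 := by linarith [hS1le]
        have e2 : 0 ≤ ρ0 + y0 * M00 - y1 * M10 := by linarith [hS0ge]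
        exact aux_p1q0 h10 h11 hy00 e1 e2 hc1 hΔ
  -- Step C : p < 1
  have hplt : p < 1 := by
    rcases lt_or_eq_of_le hp1 with h | h
    · exact h
    · exfalso
      have hpo : p = 1 := h
      subst hpo
      have hA1neg : A1 < 0 := by
        rw [hA1d]
        linarith [hopt1, mul_nonneg (mul_nonneg hD1.le hq0) h11.le]
      have hx1z : x1 = 0 := le_antisymm (aux_nonpos hx1A1 hA1neg) hx10
      subst hx1z
      have hB0neg : B0 < 0 := by
        rw [hB0d]; linarith [mul_pos (mul_pos hD1 hqpos) h01]
      have hy0z : y0 = 0 := le_antisymm (aux_nonpos hy0B0 hB0neg) hy00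
      subst hy0z
      have hB1pos : 0 < B1 := by
        rw [hB1d]; linarith [mul_pos (mul_pos hD1 hqpos) h11]
      have hy1o : y1 = 1 :=
        le_antisymm hy11 (aux_one_le (by linarith [hym1] : B1 ≤ y1 * B1) hB1pos)
      subst hy1o
      have hS0ge : 0 ≤ S0v := by linarith [hS0a]
      rw [hS0d] at hS0ge
      rcases lt_or_eq_of_le hq1 with hq' | hq'
      · have hS1le : S1v ≤ 0 := aux_nonpos' hS1b (by linarith)
        have hS1ge : 0 ≤ S1v := aux_nonneg hS1a hqpos
        have hS1eq : S1v = 0 := le_antisymm hS1le hS1ge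
        rw [hS1d] at hS1eq
        have e1 : ρ1 - M11 - x0 * M01 = 0 := by linarith [hS1eq]
        have e2 : 0 ≤ ρ0 - x0 * M00 - M10 := by linarith [hS0ge]
        exact aux_p1int h00 h01 e1 e2 hc2'
      · have hqo : q = 1 := hq'
        subst hqo
        have hA0pos : 0 < A0 := by rw [hA0d]; linarith [mul_pos hD0 h00]
        have hx0o : x0 = 1 :=
          le_antisymm hx01 (aux_one_le (by linarith [hxm0] : A0 ≤ x0 * A0) hA0pos)
        subst hx0o
        have hS1ge : 0 ≤ S1v := by linarith [hS1a]
        rw [hS1d] at hS1ge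
        have e1 : M00 + M10 ≤ ρ0 := by linarith [hS0ge]
        have e2 : M01 + M11 ≤ ρ1 := by linarith [hS1ge]
        exact aux_corner11 h00 h01 h10 h11 e1 e2 hc1' hc2' hΔ
  -- Step D : q < 1
  have hqlt : q < 1 := by
    rcases lt_or_eq_of_le hq1 with h | h
    · exact h
    · exfalso
      have hqo : q = 1 := h
      subst hqo
      have hA0pos : 0 < A0 := by
        rw [hA0d]; linarith [mul_pos (mul_pos hD0 hppos) h00]
      have hA1neg : A1 < 0 := by
        rw [hA1d]; linarith [mul_pos (mul_pos hD0 hppos) h10]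
      have hx1z : x1 = 0 := le_antisymm (aux_nonpos hx1A1 hA1neg) hx10
      subst hx1z
      have hx0o : x0 = 1 :=
        le_antisymm hx01 (aux_one_le (by linarith [hxm0] : A0 ≤ x0 * A0) hA0pos)
      subst hx0o
      have hB0neg : B0 < 0 := by
        rw [hB0d]; linarith [hopt0, mul_nonneg (mul_nonneg hD0.le hp0) h00.le]
      have hy0z : y0 = 0 := le_antisymm (aux_nonpos hy0B0 hB0neg) hy00
      subst hy0z
      have hS0eq : S0v = 0 :=
        le_antisymm (aux_nonpos' hS0b (by linarith)) (aux_nonneg hS0a hppos)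
      rw [hS0d] at hS0eq
      have hS1ge : 0 ≤ S1v := by linarith [hS1a]
      rw [hS1d] at hS1ge
      have e1 : ρ0 - M00 - y1 * M10 = 0 := by linarith [hS0eq]
      have e2 : 0 ≤ ρ1 - y1 * M11 - M01 := by linarith [hS1ge]
      exact aux_q1int h10 h11 e1 e2 hc1'
  -- Interior analysis
  have hS0eq : S0v = 0 :=
    le_antisymm (aux_nonpos' hS0b (by linarith)) (aux_nonneg hS0a hppos)
  have hS1eq : S1v = 0 :=
    le_antisymm (aux_nonpos' hS1b (by linarith)) (aux_nonneg hS1a hqpos)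
  rw [hS0d] at hS0eq
  rw [hS1d] at hS1eq
  have hU : (x0 - y0) * (M01 * M10 - M00 * M11) = ρ1 * M10 - ρ0 * M11 := by
    linear_combination M11 * hS0eq - M10 * hS1eq
  have hW : (y1 - x1) * (M01 * M10 - M00 * M11) = ρ0 * M01 - ρ1 * M00 := by
    linear_combination M00 * hS1eq - M01 * hS0eq
  have hUpos : 0 < x0 - y0 := aux_posdiv hU hc1 hΔ
  have hUlt : x0 - y0 < 1 := aux_ltdiv hU hc1' hΔ
  have hWpos : 0 < y1 - x1 := aux_posdiv hW hc2 hΔ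
  have hWlt : y1 - x1 < 1 := aux_ltdiv hW hc2' hΔ
  have hx0pos : 0 < x0 := by linarith
  have hy1pos : 0 < y1 := by linarith
  have hA0ge : 0 ≤ A0 := aux_nonneg hx0A0 hx0pos
  have hB1ge : 0 ≤ B1 := aux_nonneg hy1B1 hy1pos
  have hA0le : A0 ≤ 0 := by
    by_contra hcon
    push_neg at hcon
    have hA1neg : A1 < 0 := by
      by_contra hcon1
      push_neg at hcon1
      have e1 : (D1 * (1 - q)) * M01 ≤ (D0 * p) * M00 := by
        rw [hA0d] at hcon; linarith
      have e2 : (D0 * p) * M10 ≤ (D1 * (1 - q)) * M11 := by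
        rw [hA1d] at hcon1; linarith
      exact aux_mulcontra (mul_pos hD0 hppos) (mul_pos hD1 (by linarith)) e1 e2
        h00 h10 (by linarith)
    have hx1z : x1 = 0 := le_antisymm (aux_nonpos hx1A1 hA1neg) hx10
    have hx0o : x0 = 1 :=
      le_antisymm hx01 (aux_one_le (by rw [hx1z] at hxm0; linarith) hcon)
    have hy0pos : 0 < y0 := by rw [hx0o] at hUlt; linarith
    have hB0ge : 0 ≤ B0 := aux_nonneg hy0B0 hy0pos
    have e1 : (D1 * q) * M01 ≤ (D0 * (1 - p)) * M00 := by rw [hB0d] at hB0ge; linarith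
    have e2 : (D0 * (1 - p)) * M10 ≤ (D1 * q) * M11 := by rw [hB1d] at hB1ge; linarith
    exact aux_mulcontra (mul_pos hD0 (by linarith : (0:ℝ) < 1 - p)) (mul_pos hD1 hqpos)
      e1 e2 h00 h10 (by linarith)
  have hB1le : B1 ≤ 0 := by
    by_contra hcon
    push_neg at hcon
    have hB0neg : B0 < 0 := by
      by_contra hcon1
      push_neg at hcon1
      have e1 : (D1 * q) * M01 ≤ (D0 * (1 - p)) * M00 := by rw [hB0d] at hcon1; linarith
      have e2 : (D0 * (1 - p)) * M10 ≤ (D1 * q) * M11 := by rw [hB1d] at hcon; linarith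
      exact aux_mulcontra (mul_pos hD0 (by linarith : (0:ℝ) < 1 - p)) (mul_pos hD1 hqpos)
        e1 e2 h00 h10 (by linarith)
    have hy0z : y0 = 0 := le_antisymm (aux_nonpos hy0B0 hB0neg) hy00
    have hy1o : y1 = 1 :=
      le_antisymm hy11 (aux_one_le (by rw [hy0z] at hym1; linarith) hcon)
    have hx1pos : 0 < x1 := by rw [hy1o] at hWlt; linarith
    have hA1ge : 0 ≤ A1 := aux_nonneg hx1A1 hx1pos
    have e1 : (D1 * (1 - q)) * M01 ≤ (D0 * p) * M00 := by rw [hA0d] at hA0ge; linarith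
    have e2 : (D0 * p) * M10 ≤ (D1 * (1 - q)) * M11 := by rw [hA1d] at hA1ge; linarith
    exact aux_mulcontra (mul_pos hD0 hppos) (mul_pos hD1 (by linarith : (0:ℝ) < 1 - q))
      e1 e2 h00 h10 (by linarith)
  have hE1 : D0 * p * M00 = D1 * (1 - q) * M01 := by
    have h := le_antisymm hA0le hA0ge
    rw [hA0d] at h; linarith
  have hE2 : D1 * q * M11 = D0 * (1 - p) * M10 := by
    have h := le_antisymm hB1le hB1ge
    rw [hB1d] at h; linarith
  have hp_eq : D0 * p * (M01 * M10 - M00 * M11) = D0 * M01 * M10 - D1 * M01 * M11 := by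
    linear_combination M01 * hE2 - M11 * hE1
  have hq_eq : D1 * q * (M01 * M10 - M00 * M11) = D1 * M01 * M10 - D0 * M00 * M10 := by
    linear_combination M10 * hE1 - M00 * hE2
  have hDD : (0:ℝ) < D0 * D1 * (M01 * M10 - M00 * M11) := mul_pos (mul_pos hD0 hD1) hΔ
  refine ⟨?_, ?_, ?_, ?_⟩
  · rw [eq_div_iff (ne_of_gt hDD)]
    linear_combination D1 * hp_eq
  · have hqp : q * (D0 * D1 * (M01 * M10 - M00 * M11))
        = p * (D0 * D1 * (M01 * M10 - M00 * M11)) := by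
      linear_combination D0 * hq_eq - D1 * hp_eq - hbal
    exact mul_right_cancel₀ (ne_of_gt hDD) hqp
  · exact aux_half hD0 hD1 h00 h01 h10 h11 hΔ hbal hp_eq
  · exact aux_lt1 hD0 h11 hΔ hopt0 hp_eq
end

section
/- In the opt-out coupon game, assume 0 < ρ1·M10 − ρ0·M11 < M01·M10 − M00·M11 and 0 < ρ0·M01 − ρ1·M00 < M01·M10 − M00·M11. Then in every Bayesian Nash equilibrium both types of B agent play strictly mixed strategies: 0 < p < 1 and 0 < q < 1. -/
private lemma optout_aux_zero {x a : ℝ} (hx : 0 ≤ x) (hxa : 0 ≤ x * a) (ha : a < 0) :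
    x = 0 := by
  by_contra h
  have hx' : 0 < x := lt_of_le_of_ne hx (Ne.symm h)
  have := mul_neg_of_pos_of_neg hx' ha
  linarith

private lemma optout_aux_one {x a : ℝ} (hx : x ≤ 1) (h : a ≤ x * a) (ha : 0 < a) :
    x = 1 := by
  by_contra h'
  have hx' : x < 1 := lt_of_le_of_ne hx h'
  have := mul_pos (sub_pos.2 hx') ha
  linarith

private lemma optout_aux_nonneg {p A : ℝ} (hp : 0 < p) (h : 0 ≤ p * A) : 0 ≤ A := by
  by_contra h'
  push_neg at h'
  have := mul_neg_of_pos_of_neg hp h'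
  linarith

private lemma optout_aux_nonpos {p A : ℝ} (hp : 0 < p) (h : p * A ≤ 0) : A ≤ 0 := by
  by_contra h'
  push_neg at h'
  have := mul_pos hp h'
  linarith

set_option maxHeartbeats 1000000 in
/-- In the opt-out coupon game, under the strict interior feasibility condition,
in every Bayesian Nash equilibrium both types of B agent play strictly mixed
strategies. -/
theorem optout_BNE_strictly_mixed
    (D0 D1 M00 M01 M10 M11 ρ0 ρ1 : ℝ)
    (hD1 : 0 < D1) (hD : D1 ≤ D0) (hsum : D0 + D1 = 1)
    (h00 : 0 < M00) (h01 : 0 < M01) (h10 : 0 < M10) (h11 : 0 < M11)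
    (hopt0 : D0 * M00 < D1 * M01) (hopt1 : D1 * M11 < D0 * M10)
    (hρ0 : 0 < ρ0) (hρ1 : 0 < ρ1)
    (hc1 : 0 < ρ1 * M10 - ρ0 * M11)
    (hc1' : ρ1 * M10 - ρ0 * M11 < M01 * M10 - M00 * M11)
    (hc2 : 0 < ρ0 * M01 - ρ1 * M00)
    (hc2' : ρ0 * M01 - ρ1 * M00 < M01 * M10 - M00 * M11) :
    ∀ p q x0 x1 y0 y1 : ℝ,
      OptOutBNE D0 D1 M00 M01 M10 M11 ρ0 ρ1 p q x0 x1 y0 y1 →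
      0 < p ∧ p < 1 ∧ 0 < q ∧ q < 1 := by
  intro p q x0 x1 y0 y1 hBNE
  obtain ⟨hp, hq, hx0, hx1, hy0, hy1, hxs, hys, hA, hBp, hBq⟩ := hBNE
  have hD0 : 0 < D0 := lt_of_lt_of_le hD1 hD
  have hΔ : 0 < M01 * M10 - M00 * M11 := lt_trans hc2 hc2'
  have h01m : (0:ℝ) ∈ Set.Icc (0:ℝ) 1 := by constructor <;> norm_num
  have h11m : (1:ℝ) ∈ Set.Icc (0:ℝ) 1 := by constructor <;> norm_num
  -- sign facts for A's strategy
  have hX0 : 0 ≤ x0 * (D0 * p * M00 - D1 * (1 - q) * M01) := by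
    have h := hA 0 x1 y0 y1 h01m hx1 hy0 hy1 (by linarith [hx1.2]) hys
    linarith [h]
  have hX1 : 0 ≤ x1 * (-(D0 * p * M10) + D1 * (1 - q) * M11) := by
    have h := hA x0 0 y0 y1 hx0 h01m hy0 hy1 (by linarith [hx0.2]) hys
    linarith [h]
  have hY0 : 0 ≤ y0 * (D0 * (1 - p) * M00 - D1 * q * M01) := by
    have h := hA x0 x1 0 y1 hx0 hx1 h01m hy1 hxs (by linarith [hy1.2])
    linarith [h]
  have hY1 : 0 ≤ y1 * (-(D0 * (1 - p) * M10) + D1 * q * M11) := by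
    have h := hA x0 x1 y0 0 hx0 hx1 hy0 h01m hxs (by linarith [hy0.2])
    linarith [h]
  -- push facts
  have hPx : (D0 * p * M00 - D1 * (1 - q) * M01)
      ≤ x0 * (D0 * p * M00 - D1 * (1 - q) * M01)
        + x1 * (-(D0 * p * M10) + D1 * (1 - q) * M11) := by
    have h := hA 1 0 y0 y1 h11m h01m hy0 hy1 (by norm_num) hys
    linarith [h]
  have hPy : (-(D0 * (1 - p) * M10) + D1 * q * M11)
      ≤ y0 * (D0 * (1 - p) * M00 - D1 * q * M01)
        + y1 * (-(D0 * (1 - p) * M10) + D1 * q * M11) := by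
    have h := hA x0 x1 0 1 hx0 hx1 h01m h11m hxs (by norm_num)
    linarith [h]
  -- B's incentive facts
  have hp0A : 0 ≤ p * (ρ0 - x0 * M00 + x1 * M10 + y0 * M00 - y1 * M10) := by
    have h := hBp 0 h01m
    linarith [h]
  have hp1A : (1 - p) * (ρ0 - x0 * M00 + x1 * M10 + y0 * M00 - y1 * M10) ≤ 0 := by
    have h := hBp 1 h11m
    linarith [h]
  have hq0C : 0 ≤ q * (ρ1 - y1 * M11 + y0 * M01 + x1 * M11 - x0 * M01) := by
    have h := hBq 0 h01m
    linarith [h]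
  have hq1C : (1 - q) * (ρ1 - y1 * M11 + y0 * M01 + x1 * M11 - x0 * M01) ≤ 0 := by
    have h := hBq 1 h11m
    linarith [h]
  have hρ0lt : ρ0 < M00 + M10 := by
    by_contra hcon
    push_neg at hcon
    have hmul : (M00 + M10) * (M01 * M10 - M00 * M11) ≤ ρ0 * (M01 * M10 - M00 * M11) :=
      mul_le_mul_of_nonneg_right hcon hΔ.le
    have h1 := mul_lt_mul_of_pos_right hc1' h00
    have h2 := mul_lt_mul_of_pos_right hc2' h10
    linarith only [hmul, h1, h2]
  -- Claim 1: q ≠ 0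
  have hqne0 : q ≠ 0 := by
    intro h; subst h
    have ha0 : D0 * p * M00 - D1 * (1 - 0) * M01 < 0 := by
      have := mul_nonneg (mul_nonneg hD0.le h00.le) (sub_nonneg.2 hp.2)
      linarith only [this, hopt0]
    have hx0z : x0 = 0 := optout_aux_zero hx0.1 hX0 ha0
    have hC : ρ1 - y1 * M11 + y0 * M01 + x1 * M11 - x0 * M01 ≤ 0 := by linarith [hq1C]
    have hy1M : ρ1 + y0 * M01 + x1 * M11 ≤ y1 * M11 := by
      rw [hx0z] at hC; linarith
    have hy1pos : 0 < y1 := by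
      by_contra hle
      push_neg at hle
      have := mul_le_mul_of_nonneg_right hle h11.le
      linarith only [this, hy1M, mul_nonneg hy0.1 h01.le, mul_nonneg hx1.1 h11.le, hρ1]
    have hp1 : p = 1 := by
      by_contra hne
      have h1p : 0 < 1 - p := lt_of_le_of_ne (by linarith [hp.2]) (by intro hh; exact hne (by linarith))
      have hpos : 0 < y1 * (D0 * (1 - p) * M10) :=
        mul_pos hy1pos (mul_pos (mul_pos hD0 h1p) h10)
      linarith only [hY1, hpos]
    subst hp1
    have ha1 : -(D0 * 1 * M10) + D1 * (1 - 0) * M11 < 0 := by linarith only [hopt1]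
    have hx1z : x1 = 0 := optout_aux_zero hx1.1 hX1 ha1
    have hAge : 0 ≤ ρ0 - x0 * M00 + x1 * M10 + y0 * M00 - y1 * M10 := by linarith [hp0A]
    have f1 : ρ1 + y0 * M01 ≤ y1 * M11 := by rw [hx1z] at hy1M; linarith
    have f2 : y1 * M10 ≤ ρ0 + y0 * M00 := by rw [hx0z, hx1z] at hAge; linarith
    linarith only [mul_le_mul_of_nonneg_right f1 h10.le,
      mul_le_mul_of_nonneg_right f2 h11.le, mul_nonneg hy0.1 hΔ.le, hc1]
  -- Claim 2: q ≠ 1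
  have hqne1 : q ≠ 1 := by
    intro h; subst h
    have hb0 : D0 * (1 - p) * M00 - D1 * 1 * M01 < 0 := by
      have := mul_nonneg (mul_nonneg hD0.le h00.le) hp.1
      linarith only [this, hopt0]
    have hy0z : y0 = 0 := optout_aux_zero hy0.1 hY0 hb0
    have hCge : 0 ≤ ρ1 - y1 * M11 + y0 * M01 + x1 * M11 - x0 * M01 := by linarith [hq0C]
    rcases eq_or_lt_of_le hp.1 with hpz | hppos
    · -- p = 0
      have hp0 : p = 0 := hpz.symm
      subst hp0
      have hb1 : -(D0 * (1 - 0) * M10) + D1 * 1 * M11 < 0 := by linarith only [hopt1]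
      have hy1z : y1 = 0 := optout_aux_zero hy1.1 hY1 hb1
      have hAle : ρ0 - x0 * M00 + x1 * M10 + y0 * M00 - y1 * M10 ≤ 0 := by linarith [hp1A]
      have g1 : ρ0 + x1 * M10 ≤ x0 * M00 := by rw [hy0z, hy1z] at hAle; linarith
      have g2 : x0 * M01 ≤ ρ1 + x1 * M11 := by rw [hy0z, hy1z] at hCge; linarith
      linarith only [mul_le_mul_of_nonneg_right g1 h01.le,
        mul_le_mul_of_nonneg_right g2 h00.le, mul_nonneg hx1.1 hΔ.le, hc2]
    rcases eq_or_lt_of_le hp.2 with hp1 | hplt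
    · -- p = 1
      subst hp1
      have ha1 : -(D0 * 1 * M10) + D1 * (1 - 1) * M11 < 0 := by
        linarith only [mul_pos hD0 h10]
      have hx1z : x1 = 0 := optout_aux_zero hx1.1 hX1 ha1
      have ha0 : 0 < D0 * 1 * M00 - D1 * (1 - 1) * M01 := by linarith only [mul_pos hD0 h00]
      have hx01 : x0 = 1 := by
        have hpx := hPx
        rw [hx1z] at hpx
        have h2 : (D0 * 1 * M00 - D1 * (1 - 1) * M01)
            ≤ x0 * (D0 * 1 * M00 - D1 * (1 - 1) * M01) := by linarith [hpx]
        exact optout_aux_one hx0.2 h2 ha0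
      have hb1 : 0 < -(D0 * (1 - 1) * M10) + D1 * 1 * M11 := by linarith only [mul_pos hD1 h11]
      have hy11 : y1 = 1 := by
        have hpy := hPy
        rw [hy0z] at hpy
        have h2 : (-(D0 * (1 - 1) * M10) + D1 * 1 * M11)
            ≤ y1 * (-(D0 * (1 - 1) * M10) + D1 * 1 * M11) := by linarith [hpy]
        exact optout_aux_one hy1.2 h2 hb1
      have hAge : 0 ≤ ρ0 - x0 * M00 + x1 * M10 + y0 * M00 - y1 * M10 := by linarith [hp0A]
      rw [hx01, hx1z, hy0z, hy11] at hAge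
      linarith
    · -- 0 < p < 1
      have ha1 : -(D0 * p * M10) + D1 * (1 - 1) * M11 < 0 := by
        linarith only [mul_pos (mul_pos hD0 hppos) h10]
      have hx1z : x1 = 0 := optout_aux_zero hx1.1 hX1 ha1
      have ha0 : 0 < D0 * p * M00 - D1 * (1 - 1) * M01 := by
        linarith only [mul_pos (mul_pos hD0 hppos) h00]
      have hx01 : x0 = 1 := by
        have hpx := hPx
        rw [hx1z] at hpx
        have h2 : (D0 * p * M00 - D1 * (1 - 1) * M01)
            ≤ x0 * (D0 * p * M00 - D1 * (1 - 1) * M01) := by linarith [hpx]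
        exact optout_aux_one hx0.2 h2 ha0
      have hAge : 0 ≤ ρ0 - x0 * M00 + x1 * M10 + y0 * M00 - y1 * M10 :=
        optout_aux_nonneg hppos hp0A
      have hAle : ρ0 - x0 * M00 + x1 * M10 + y0 * M00 - y1 * M10 ≤ 0 :=
        optout_aux_nonpos (by linarith) hp1A
      have hy1eq : y1 * M10 = ρ0 - M00 := by
        rw [hx01, hx1z, hy0z] at hAge hAle; linarith
      have hCge' : 0 ≤ ρ1 - y1 * M11 - M01 := by
        rw [hx01, hx1z, hy0z] at hCge; linarith
      have key : 0 ≤ (ρ1 - y1 * M11 - M01) * M10 := mul_nonneg hCge' h10.le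
      have e : y1 * M10 * M11 = (ρ0 - M00) * M11 := by rw [hy1eq]
      linarith only [key, e, hc1']
  -- Claim 3: p ≠ 0
  have hpne0 : p ≠ 0 := by
    intro h; subst h
    have hb1 : -(D0 * (1 - 0) * M10) + D1 * q * M11 < 0 := by
      have := mul_nonneg (mul_nonneg hD1.le h11.le) (sub_nonneg.2 hq.2)
      linarith only [this, hopt1]
    have hy1z : y1 = 0 := optout_aux_zero hy1.1 hY1 hb1
    have hAle : ρ0 - x0 * M00 + x1 * M10 + y0 * M00 - y1 * M10 ≤ 0 := by linarith [hp1A]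
    rw [hy1z] at hAle
    have hx0M : ρ0 ≤ x0 * M00 := by
      linarith only [mul_nonneg hx1.1 h10.le, mul_nonneg hy0.1 h00.le, hAle]
    have hx0pos : 0 < x0 := by
      by_contra hle
      push_neg at hle
      have := mul_le_mul_of_nonneg_right hle h00.le
      linarith only [this, hx0M, hρ0]
    have hq1 : q = 1 := by
      refine le_antisymm hq.2 ?_
      by_contra hqlt
      push_neg at hqlt
      have hpos : 0 < x0 * D1 * M01 * (1 - q) :=
        mul_pos (mul_pos (mul_pos hx0pos hD1) h01) (by linarith)
      linarith only [hX0, hpos]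
    exact hqne1 hq1
  -- Claim 4: p ≠ 1
  have hpne1 : p ≠ 1 := by
    intro h; subst h
    have hqpos : 0 < q := lt_of_le_of_ne hq.1 (Ne.symm hqne0)
    have hqlt : q < 1 := lt_of_le_of_ne hq.2 hqne1
    have ha1 : -(D0 * 1 * M10) + D1 * (1 - q) * M11 < 0 := by
      have := mul_nonneg (mul_nonneg hD1.le h11.le) hq.1
      linarith only [this, hopt1]
    have hx1z : x1 = 0 := optout_aux_zero hx1.1 hX1 ha1
    have hb0 : D0 * (1 - 1) * M00 - D1 * q * M01 < 0 := by
      linarith only [mul_pos (mul_pos hD1 hqpos) h01]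
    have hy0z : y0 = 0 := optout_aux_zero hy0.1 hY0 hb0
    have hb1 : 0 < -(D0 * (1 - 1) * M10) + D1 * q * M11 := by
      linarith only [mul_pos (mul_pos hD1 hqpos) h11]
    have hy11 : y1 = 1 := by
      have hpy := hPy
      rw [hy0z] at hpy
      have h2 : (-(D0 * (1 - 1) * M10) + D1 * q * M11)
          ≤ y1 * (-(D0 * (1 - 1) * M10) + D1 * q * M11) := by linarith [hpy]
      exact optout_aux_one hy1.2 h2 hb1
    have hCge : 0 ≤ ρ1 - y1 * M11 + y0 * M01 + x1 * M11 - x0 * M01 :=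
      optout_aux_nonneg hqpos hq0C
    have hCle : ρ1 - y1 * M11 + y0 * M01 + x1 * M11 - x0 * M01 ≤ 0 :=
      optout_aux_nonpos (by linarith) hq1C
    have hx0eq : x0 * M01 = ρ1 - M11 := by
      rw [hy11, hy0z, hx1z] at hCge hCle; linarith
    have hAge : 0 ≤ ρ0 - x0 * M00 + x1 * M10 + y0 * M00 - y1 * M10 := by linarith [hp0A]
    rw [hy11, hy0z, hx1z] at hAge
    have key : 0 ≤ (ρ0 - x0 * M00 - M10) * M01 := mul_nonneg (by linarith) h01.le
    have e : x0 * M01 * M00 = (ρ1 - M11) * M00 := by rw [hx0eq]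
    linarith only [key, e, hc2']
  exact ⟨lt_of_le_of_ne hp.1 (Ne.symm hpne0), lt_of_le_of_ne hp.2 hpne1,
    lt_of_le_of_ne hq.1 (Ne.symm hqne0), lt_of_le_of_ne hq.2 hqne1⟩
end

section
/- In the opt-out coupon game, every Bayesian Nash equilibrium (p, q, x0, x1, y0, y1) satisfies D0·M00·p ≥ D1·M01·(1−q) or D0·M10·(1−p) ≤ D1·M11·q. (In ratio form: either p/(1−q) ≥ D1·M01/(D0·M00), or (1−p)/q ≤ D1·M11/(D0·M10).) -/
/-- In the opt-out coupon game, every Bayesian Nash equilibrium satisfies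
`D0·M00·p ≥ D1·M01·(1−q)` or `D0·M10·(1−p) ≤ D1·M11·q`. -/
theorem optout_BNE_ratio_condition
    (D0 D1 M00 M01 M10 M11 ρ0 ρ1 : ℝ)
    (hD1 : 0 < D1) (hD : D1 ≤ D0) (hsum : D0 + D1 = 1)
    (h00 : 0 < M00) (h01 : 0 < M01) (h10 : 0 < M10) (h11 : 0 < M11)
    (hopt0 : D0 * M00 < D1 * M01) (hopt1 : D1 * M11 < D0 * M10)
    (hρ0 : 0 < ρ0) (hρ1 : 0 < ρ1) :
    ∀ p q x0 x1 y0 y1 : ℝ,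
      OptOutBNE D0 D1 M00 M01 M10 M11 ρ0 ρ1 p q x0 x1 y0 y1 →
      D1 * M01 * (1 - q) ≤ D0 * M00 * p ∨ D0 * M10 * (1 - p) ≤ D1 * M11 * q := by
  intro p q x0 x1 y0 y1 hBNE
  obtain ⟨hp, hq, hx0, hx1, hy0, hy1, hxs, hys, hA, hBp, hBq⟩ := hBNE
  by_contra hcon
  push_neg at hcon
  obtain ⟨h1, h2⟩ := hcon
  have hD0 : 0 < D0 := lt_of_lt_of_le hD1 hD
  have hc0 : D0 * p * M00 - D1 * (1 - q) * M01 < 0 := by nlinarith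
  have hc3 : -(D0 * (1 - p) * M10) + D1 * q * M11 < 0 := by nlinarith
  have hx0z : x0 = 0 := by
    have h := hA 0 x1 y0 y1 (by constructor <;> norm_num) hx1 hy0 hy1
      (by linarith [hx0.1]) hys
    have key : 0 ≤ x0 * (D0 * p * M00 - D1 * (1 - q) * M01) := by linarith
    rcases eq_or_lt_of_le hx0.1 with h' | h'
    · exact h'.symm
    · exact absurd key (not_le.mpr (by nlinarith [mul_pos h' (neg_pos.mpr hc0)]))
  have hy1z : y1 = 0 := by
    have h := hA x0 x1 y0 0 hx0 hx1 hy0 (by constructor <;> norm_num)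
      hxs (by linarith [hy1.1])
    have key : 0 ≤ y1 * (-(D0 * (1 - p) * M10) + D1 * q * M11) := by linarith
    rcases eq_or_lt_of_le hy1.1 with h' | h'
    · exact h'.symm
    · exact absurd key (not_le.mpr (by nlinarith [mul_pos h' (neg_pos.mpr hc3)]))
  have hp1 : p = 1 := by
    have h := hBp 1 (by constructor <;> norm_num)
    rw [hx0z, hy1z] at h
    have hcoef : 0 < ρ0 + x1 * M10 + y0 * M00 := by
      nlinarith [hx1.1, hy0.1]
    have hA' : (1 - p) * (ρ0 + x1 * M10 + y0 * M00) ≤ 0 := by nlinarith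
    rcases eq_or_lt_of_le hp.2 with h' | h'
    · exact h'
    · exact absurd hA' (not_le.mpr (mul_pos (sub_pos.mpr h') hcoef))
  have hq1 : q = 1 := by
    have h := hBq 1 (by constructor <;> norm_num)
    rw [hx0z, hy1z] at h
    have hcoef : 0 < ρ1 + y0 * M01 + x1 * M11 := by
      nlinarith [hx1.1, hy0.1]
    have hA' : (1 - q) * (ρ1 + y0 * M01 + x1 * M11) ≤ 0 := by nlinarith
    rcases eq_or_lt_of_le hq.2 with h' | h'
    · exact h'
    · exact absurd hA' (not_le.mpr (mul_pos (sub_pos.mpr h') hcoef))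
  rw [hp1, hq1] at h1
  nlinarith [mul_pos hD0 h00]
end

section
/- Let M00, M01, M10, M11 > 0 with M00·M11 < M01·M10, let Δ := M01·M10 − M00·M11, and let ρ0, ρ1 > 0. If ρ1·M10 − ρ0·M11 ≤ Δ and ρ0·M01 − ρ1·M00 ≤ Δ, then ρ0 ≤ M00 + M10 and ρ1 ≤ M01 + M11. -/
/-- If `ρ1·M10 − ρ0·M11 ≤ Δ` and `ρ0·M01 − ρ1·M00 ≤ Δ` where
`Δ = M01·M10 − M00·M11 > 0`, then `ρ0 ≤ M00 + M10` and `ρ1 ≤ M01 + M11`. -/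
theorem optout_feasibility_excludes_truthful
    (M00 M01 M10 M11 ρ0 ρ1 : ℝ)
    (h00 : 0 < M00) (h01 : 0 < M01) (h10 : 0 < M10) (h11 : 0 < M11)
    (hΔ : M00 * M11 < M01 * M10)
    (hρ0 : 0 < ρ0) (hρ1 : 0 < ρ1)
    (hc1 : ρ1 * M10 - ρ0 * M11 ≤ M01 * M10 - M00 * M11)
    (hc2 : ρ0 * M01 - ρ1 * M00 ≤ M01 * M10 - M00 * M11) :
    ρ0 ≤ M00 + M10 ∧ ρ1 ≤ M01 + M11 := by
  constructor
  · nlinarith [mul_le_mul_of_nonneg_left hc1 h00.le, mul_le_mul_of_nonneg_left hc2 h10.le]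
  · nlinarith [mul_le_mul_of_nonneg_left hc1 h01.le, mul_le_mul_of_nonneg_left hc2 h11.le]
end

section
/- In the opt-out coupon game, assume 0 ≤ ρ1·M10 − ρ0·M11 ≤ Δ and 0 ≤ ρ0·M01 − ρ1·M00 ≤ Δ, where Δ := M01·M10 − M00·M11 (> 0). Then the strategy profile with x0 = (M10·ρ1 − M11·ρ0)/Δ, x1 = 0, y0 = 0, y1 = (M01·ρ0 − M00·ρ1)/Δ, p = D1·M01·(D0·M10 − D1·M11)/(D0·D1·Δ), q = D0·M10·(D1·M01 − D0·M00)/(D0·D1·Δ) is a Bayesian Nash equilibrium; moreover p, q ∈ (0,1). -/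
set_option maxHeartbeats 1000000


/-- Under the (non-strict) interior feasibility condition, the explicitly given
strategy profile is a Bayesian Nash equilibrium of the opt-out coupon game, and
B's strategy is strictly mixed. -/
theorem optout_interior_BNE_exists
    (D0 D1 M00 M01 M10 M11 ρ0 ρ1 : ℝ)
    (hD1 : 0 < D1) (hD : D1 ≤ D0) (hsum : D0 + D1 = 1)
    (h00 : 0 < M00) (h01 : 0 < M01) (h10 : 0 < M10) (h11 : 0 < M11)
    (hopt0 : D0 * M00 < D1 * M01) (hopt1 : D1 * M11 < D0 * M10)
    (hρ0 : 0 < ρ0) (hρ1 : 0 < ρ1)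
    (hc1 : 0 ≤ ρ1 * M10 - ρ0 * M11)
    (hc1' : ρ1 * M10 - ρ0 * M11 ≤ M01 * M10 - M00 * M11)
    (hc2 : 0 ≤ ρ0 * M01 - ρ1 * M00)
    (hc2' : ρ0 * M01 - ρ1 * M00 ≤ M01 * M10 - M00 * M11) :
    OptOutBNE D0 D1 M00 M01 M10 M11 ρ0 ρ1
      (D1 * M01 * (D0 * M10 - D1 * M11) / (D0 * D1 * (M01 * M10 - M00 * M11)))
      (D0 * M10 * (D1 * M01 - D0 * M00) / (D0 * D1 * (M01 * M10 - M00 * M11)))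
      ((M10 * ρ1 - M11 * ρ0) / (M01 * M10 - M00 * M11)) 0 0
      ((M01 * ρ0 - M00 * ρ1) / (M01 * M10 - M00 * M11)) ∧
    0 < D1 * M01 * (D0 * M10 - D1 * M11) / (D0 * D1 * (M01 * M10 - M00 * M11)) ∧
    D1 * M01 * (D0 * M10 - D1 * M11) / (D0 * D1 * (M01 * M10 - M00 * M11)) < 1 ∧
    0 < D0 * M10 * (D1 * M01 - D0 * M00) / (D0 * D1 * (M01 * M10 - M00 * M11)) ∧
    D0 * M10 * (D1 * M01 - D0 * M00) / (D0 * D1 * (M01 * M10 - M00 * M11)) < 1 := by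
  
  have hD0 : 0 < D0 := lt_of_lt_of_le hD1 hD
  have hΔ : 0 < M01 * M10 - M00 * M11 := by nlinarith
  have hΔ' : M01 * M10 - M00 * M11 ≠ 0 := ne_of_gt hΔ
  have hden : D0 * D1 * (M01 * M10 - M00 * M11) ≠ 0 := by positivity
  have hD0' : D0 ≠ 0 := ne_of_gt hD0
  have hD1' : D1 ≠ 0 := ne_of_gt hD1
  set Δ := M01 * M10 - M00 * M11 with hΔdef
  set P := D1 * M01 * (D0 * M10 - D1 * M11) / (D0 * D1 * Δ) with hP
  set Q := D0 * M10 * (D1 * M01 - D0 * M00) / (D0 * D1 * Δ) with hQ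
  set X0 := (M10 * ρ1 - M11 * ρ0) / Δ with hX0
  set Y1 := (M01 * ρ0 - M00 * ρ1) / Δ with hY1
  have hg1 : 0 < D0 * M10 - D1 * M11 := by linarith
  have hg2 : 0 < D1 * M01 - D0 * M00 := by linarith
  -- bounds for P
  have hPpos : 0 < P := by rw [hP]; positivity
  have hPlt : P < 1 := by
    rw [hP, div_lt_one (by positivity)]
    have key : D0 * D1 * Δ - D1 * M01 * (D0 * M10 - D1 * M11)
        = D1 * (M11 * (D1 * M01 - D0 * M00)) := by rw [hΔdef]; ring
    have pos := mul_pos hD1 (mul_pos h11 hg2)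
    linarith
  have hQpos : 0 < Q := by rw [hQ]; positivity
  have hQlt : Q < 1 := by
    rw [hQ, div_lt_one (by positivity)]
    have key : D0 * D1 * Δ - D0 * M10 * (D1 * M01 - D0 * M00)
        = D0 * (M00 * (D0 * M10 - D1 * M11)) := by rw [hΔdef]; ring
    have pos := mul_pos hD0 (mul_pos h00 hg1)
    linarith
  -- bounds for X0, Y1
  have hX0mem : X0 ∈ Set.Icc (0:ℝ) 1 := by
    constructor
    · rw [hX0]; apply div_nonneg _ (le_of_lt hΔ); nlinarith
    · rw [hX0, div_le_one hΔ]; nlinarith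
  have hY1mem : Y1 ∈ Set.Icc (0:ℝ) 1 := by
    constructor
    · rw [hY1]; apply div_nonneg _ (le_of_lt hΔ); nlinarith
    · rw [hY1, div_le_one hΔ]; nlinarith
  -- coefficients in A's objective
  have hC0 : D0 * P * M00 - D1 * (1 - Q) * M01 = 0 := by
    rw [hP, hQ]; field_simp; ring
  have hC3 : -(D0 * (1 - P) * M10) + D1 * Q * M11 = 0 := by
    rw [hP, hQ]; field_simp; ring
  have hC1 : -(D0 * P * M10) + D1 * (1 - Q) * M11 ≤ 0 := by
    have h : -(D0 * P * M10) + D1 * (1 - Q) * M11 = -(D0 * M10 - D1 * M11) := by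
      rw [hP, hQ]; field_simp; ring
    rw [h]; linarith
  have hC2 : D0 * (1 - P) * M00 - D1 * Q * M01 ≤ 0 := by
    have h : D0 * (1 - P) * M00 - D1 * Q * M01 = -(D1 * M01 - D0 * M00) := by
      rw [hP, hQ]; field_simp; ring
    rw [h]; linarith
  -- B's objectives are constant
  have hBp : ρ0 - X0 * M00 + 0 * M10 = -(0 * M00) + Y1 * M10 := by
    rw [hX0, hY1]; field_simp; ring
  have hBq : ρ1 - Y1 * M11 + 0 * M01 = -(0 * M11) + X0 * M01 := by
    rw [hX0, hY1]; field_simp; ring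
  refine ⟨⟨⟨le_of_lt hPpos, le_of_lt hPlt⟩, ⟨le_of_lt hQpos, le_of_lt hQlt⟩,
    hX0mem, ⟨le_refl 0, zero_le_one⟩, ⟨le_refl 0, zero_le_one⟩, hY1mem,
    by linarith [hX0mem.2], by linarith [hY1mem.2], ?_, ?_, ?_⟩,
    hPpos, hPlt, hQpos, hQlt⟩
  · intro x0' x1' y0' y1' hx0 hx1 hy0 hy1 _ _
    have h1 : x1' * (-(D0 * P * M10) + D1 * (1 - Q) * M11) ≤ 0 :=
      mul_nonpos_of_nonneg_of_nonpos hx1.1 hC1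
    have h2 : y0' * (D0 * (1 - P) * M00 - D1 * Q * M01) ≤ 0 :=
      mul_nonpos_of_nonneg_of_nonpos hy0.1 hC2
    rw [hC0, hC3]
    nlinarith
  · intro p' _
    rw [hBp]
    have h : ∀ t : ℝ, t * (-(0 * M00) + Y1 * M10) + (1 - t) * (-(0 * M00) + Y1 * M10)
        = -(0 * M00) + Y1 * M10 := fun t => by ring
    rw [h, h]
  · intro q' _
    rw [hBq]
    have h : ∀ t : ℝ, t * (-(0 * M11) + X0 * M01) + (1 - t) * (-(0 * M11) + X0 * M01)
        = -(0 * M11) + X0 * M01 := fun t => by ring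
    rw [h, h]
end

section
/- Let M00, M01, M10, M11 > 0 with M00·M11 < M01·M10, and let ρ0, ρ1 > 0. Then there exist x0, x1 ∈ [0,1] satisfying both ρ0 ≤ x0·M00 − x1·M10 and ρ1 ≥ x0·M01 − x1·M11 if and only if ρ0 ≤ M00 and ρ0·M01 ≤ ρ1·M00. -/
/-- Characterization of when A can commit to accusation probabilities
`(x0, x1)` after signal 0 supporting the equilibrium in which B always sends
signal 1: such `x0, x1 ∈ [0,1]` with `ρ0 ≤ x0·M00 − x1·M10` and
`ρ1 ≥ x0·M01 − x1·M11` exist iff `ρ0 ≤ M00` and `ρ0·M01 ≤ ρ1·M00`. -/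
theorem optout_P1_feasibility (M00 M01 M10 M11 ρ0 ρ1 : ℝ)
    (h00 : 0 < M00) (h01 : 0 < M01) (h10 : 0 < M10) (h11 : 0 < M11)
    (hΔ : M00 * M11 < M01 * M10) (hρ0 : 0 < ρ0) (hρ1 : 0 < ρ1) :
    (∃ x0 ∈ Set.Icc (0:ℝ) 1, ∃ x1 ∈ Set.Icc (0:ℝ) 1,
        ρ0 ≤ x0 * M00 - x1 * M10 ∧ x0 * M01 - x1 * M11 ≤ ρ1) ↔
      (ρ0 ≤ M00 ∧ ρ0 * M01 ≤ ρ1 * M00) := by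
  constructor
  · rintro ⟨x0, ⟨hx00, hx01⟩, x1, ⟨hx10, hx11⟩, h1, h2⟩
    constructor
    · nlinarith
    · nlinarith [mul_le_mul_of_nonneg_right h1 h01.le,
        mul_le_mul_of_nonneg_right h2 h00.le,
        mul_nonneg hx10 (sub_pos.mpr hΔ).le]
  · rintro ⟨h1, h2⟩
    refine ⟨ρ0 / M00, ⟨by positivity, by rw [div_le_one h00]; exact h1⟩,
      0, ⟨le_refl 0, zero_le_one⟩, ?_, ?_⟩
    · rw [zero_mul, sub_zero, div_mul_cancel₀ _ h00.ne']
    · rw [zero_mul, sub_zero, div_mul_eq_mul_div, div_le_iff₀ h00]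
      linarith
end

section
/- Let M00, M01, M10, M11 > 0 with M00·M11 < M01·M10, let Δ := M01·M10 − M00·M11, and let ρ0, ρ1 > 0. Then at least one of the following six conditions holds: (1) ρ0 ≥ M00 + M10 and ρ1 ≥ M01 + M11; (2) ρ0 ≤ M00 and ρ0·M01 ≤ ρ1·M00; (3) ρ1 ≤ M11 and ρ0·M11 ≥ ρ1·M10; (4) M00 ≤ ρ0 ≤ M00 + M10 and ρ1·M10 − ρ0·M11 ≥ Δ; (5) M11 ≤ ρ1 ≤ M11 + M01 and ρ0·M01 − ρ1·M00 ≥ Δ; (6) 0 ≤ ρ1·M10 − ρ0·M11 ≤ Δ and 0 ≤ ρ0·M01 − ρ1·M00 ≤ Δ. -/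
/-- Every choice of the opt-out coupon game's parameters satisfies at least one
of the six feasibility conditions for the six possible Bayesian Nash
equilibria. -/
theorem optout_conditions_cover (M00 M01 M10 M11 ρ0 ρ1 : ℝ)
    (h00 : 0 < M00) (h01 : 0 < M01) (h10 : 0 < M10) (h11 : 0 < M11)
    (hΔ : M00 * M11 < M01 * M10) (hρ0 : 0 < ρ0) (hρ1 : 0 < ρ1) :
    (M00 + M10 ≤ ρ0 ∧ M01 + M11 ≤ ρ1) ∨
    (ρ0 ≤ M00 ∧ ρ0 * M01 ≤ ρ1 * M00) ∨
    (ρ1 ≤ M11 ∧ ρ1 * M10 ≤ ρ0 * M11) ∨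
    (M00 ≤ ρ0 ∧ ρ0 ≤ M00 + M10 ∧ M01 * M10 - M00 * M11 ≤ ρ1 * M10 - ρ0 * M11) ∨
    (M11 ≤ ρ1 ∧ ρ1 ≤ M11 + M01 ∧ M01 * M10 - M00 * M11 ≤ ρ0 * M01 - ρ1 * M00) ∨
    (0 ≤ ρ1 * M10 - ρ0 * M11 ∧ ρ1 * M10 - ρ0 * M11 ≤ M01 * M10 - M00 * M11 ∧
      0 ≤ ρ0 * M01 - ρ1 * M00 ∧ ρ0 * M01 - ρ1 * M00 ≤ M01 * M10 - M00 * M11) := by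
  by_cases hA : 0 ≤ ρ1 * M10 - ρ0 * M11
  · by_cases hB : 0 ≤ ρ0 * M01 - ρ1 * M00
    · by_cases hAΔ : ρ1 * M10 - ρ0 * M11 ≤ M01 * M10 - M00 * M11
      · by_cases hBΔ : ρ0 * M01 - ρ1 * M00 ≤ M01 * M10 - M00 * M11
        · exact Or.inr (Or.inr (Or.inr (Or.inr (Or.inr ⟨hA, hAΔ, hB, hBΔ⟩))))
        · -- B > Δ : cond 5 or cond 1
          push_neg at hBΔ
          by_cases h5 : ρ1 ≤ M11 + M01
          · refine Or.inr (Or.inr (Or.inr (Or.inr (Or.inl ⟨?_, h5, le_of_lt hBΔ⟩))))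
            nlinarith [mul_pos h01 h10]
          · push_neg at h5
            refine Or.inl ⟨?_, by linarith⟩
            nlinarith
      · -- A > Δ : cond 4 or cond 1
        push_neg at hAΔ
        by_cases h4 : ρ0 ≤ M00 + M10
        · refine Or.inr (Or.inr (Or.inr (Or.inl ⟨?_, h4, le_of_lt hAΔ⟩)))
          nlinarith [mul_pos h01 h10]
        · push_neg at h4
          refine Or.inl ⟨le_of_lt h4, ?_⟩
          nlinarith
    · -- B < 0 : cond 2, cond 4, or cond 1
      push_neg at hB
      by_cases h2 : ρ0 ≤ M00
      · exact Or.inr (Or.inl ⟨h2, by linarith⟩)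
      · push_neg at h2
        by_cases h4 : ρ0 ≤ M00 + M10
        · refine Or.inr (Or.inr (Or.inr (Or.inl ⟨le_of_lt h2, h4, ?_⟩)))
          nlinarith
        · push_neg at h4
          refine Or.inl ⟨le_of_lt h4, ?_⟩
          nlinarith
  · -- A < 0 : cond 3, cond 5, or cond 1
    push_neg at hA
    by_cases h3 : ρ1 ≤ M11
    · exact Or.inr (Or.inr (Or.inl ⟨h3, by linarith⟩))
    · push_neg at h3
      by_cases h5 : ρ1 ≤ M11 + M01
      · refine Or.inr (Or.inr (Or.inr (Or.inr (Or.inl ⟨le_of_lt h3, h5, ?_⟩))))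
        nlinarith
      · push_neg at h5
        refine Or.inl ⟨?_, by linarith⟩
        nlinarith
end
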